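/- arXiv:2511.04836 — 5 statements merged into one kernel-verified Lean document; each statement's English description precedes it below -/
import Mathlib

section
/- The map sending each s ∈ S to the product ∏_{b∈𝔅}(b,s) ∈ W̌ extends to a well-defined group homomorphism φ : W → W̌ (the factors (b,s), b ∈ 𝔅, pairwise commute in W̌, so the product is unambiguous). Moreover, the ℤ-linear isomorphism Ψ : RΛ_S → ℤΛ_Š determined by b·α_s ↦ α_{(b,s)} (b ∈ 𝔅, s ∈ S) is W-equivariant with respect to φ: Ψ(w·v) = φ(w)·Ψ(v) for all w ∈ W and v ∈ RΛ_S. -/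
open scoped BigOperators

noncomputable section

/-- Data of a fusion ring structure on a ring `R`, with `ℤ`-basis indexed by `ι`. -/
structure FusionData (R : Type*) [Ring R] (ι : Type*) [Fintype ι] [DecidableEq ι] where
  /-- the distinguished basis -/
  b : Module.Basis ι ℤ R
  /-- the index of the unit -/
  unit : ι
  b_unit : b unit = 1
  basis_mul_ne_zero : ∀ j k, b j * b k ≠ 0
  c_nonneg : ∀ j k i, 0 ≤ b.repr (b j * b k) i
  /-- the involution on the index set -/
  inv : ι → ι
  inv_invol : ∀ j, inv (inv j) = j
  /-- the `ℤ`-linear extension of the involution -/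
  star : R →+ R
  star_basis : ∀ j, star (b j) = b (inv j)
  star_mul : ∀ x y, star (x * y) = star y * star x
  c_unit_iff : ∀ j k, b.repr (b j * b k) unit = 1 ↔ k = inv j

namespace FusionData

variable {R : Type*} [Ring R] {ι : Type*} [Fintype ι] [DecidableEq ι]

/-- The structure constants of a fusion ring. -/
def c (F : FusionData R ι) (j k i : ι) : ℤ := F.b.repr (F.b j * F.b k) i

/-- Nonnegativity of an element of a fusion ring: all basis coefficients are nonnegative. -/
def nonneg (F : FusionData R ι) (r : R) : Prop := ∀ i, 0 ≤ F.b.repr r i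

end FusionData

/-- The basis vector `α_s` of the free module `S → R`. -/
def simRoot (R : Type*) [Ring R] {S : Type*} [DecidableEq S] (s : S) : S → R :=
  Pi.single s 1

/-- A geometric realisation of the Coxeter system `(W, S)` over a fusion ring `R`,
together with a Frobenius–Perron dimension homomorphism. -/
structure GeomSetting (R : Type*) [Ring R] (ι : Type*) [Fintype ι] [DecidableEq ι]
    (S : Type*) [Fintype S] [DecidableEq S] (W : Type*) [Group W] where
  /-- the fusion ring structure on `R` -/
  FD : FusionData R ι
  /-- the Coxeter matrix (`0` denotes `∞`) -/
  M : CoxeterMatrix S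
  /-- the Coxeter system -/
  cs : CoxeterSystem M W
  /-- the Frobenius–Perron dimension -/
  FP : R →+* ℝ
  FP_basis : ∀ i, 1 ≤ FP (FD.b i)
  FP_star : ∀ r, FP (FD.star r) = FP r
  /-- the sesquilinear form on `RΛ_S = S → R` -/
  B : (S → R) → (S → R) → R
  B_add_left : ∀ u u' v, B (u + u') v = B u v + B u' v
  B_add_right : ∀ u v v', B u (v + v') = B u v + B u v'
  B_sesq : ∀ (x y : R) (s t : S),
    B (x • simRoot R s) (y • simRoot R t)
      = y * B (simRoot R s) (simRoot R t) * FD.star x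
  cartan_diag : ∀ s, B (simRoot R s) (simRoot R s) = 2
  cartan_nonneg : ∀ s t, s ≠ t →
    FD.nonneg (-(B (simRoot R s) (simRoot R t)))
  cartan_star : ∀ s t, s ≠ t →
    B (simRoot R t) (simRoot R s)
      = FD.star (B (simRoot R s) (simRoot R t))
  cartan_fin : ∀ s t, s ≠ t → M s t ≠ 0 →
    FP (B (simRoot R s) (simRoot R t))
      = -2 * Real.cos (Real.pi / (M s t : ℝ))
  cartan_inf : ∀ s t, s ≠ t → M s t = 0 →
    FP (B (simRoot R s) (simRoot R t)) ≤ -2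
  /-- the left `R`-linear action of `W` on `RΛ_S` -/
  rep : W →* ((S → R) ≃ₗ[R] (S → R))
  rep_simple : ∀ (s : S) (v : S → R),
    rep (cs.simple s) v = v - B (simRoot R s) v • simRoot R s

namespace GeomSetting

variable {R : Type*} [Ring R] {ι : Type*} [Fintype ι] [DecidableEq ι]
  {S : Type*} [Fintype S] [DecidableEq S] {W : Type*} [Group W]

/-- The Cartan matrix `r_{s,t}` of the realisation. -/
def cartan (G : GeomSetting R ι S W) (s t : S) : R :=
  G.B (simRoot R s) (simRoot R t)

/-- The unfolded (integral) Cartan matrix `ř`. -/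
def rcheck (G : GeomSetting R ι S W) (p q : ι × S) : ℤ :=
  if p.2 = q.2 then (if p.1 = q.1 then 2 else 0)
  else G.FD.b.repr (G.FD.b q.1 * G.cartan p.2 q.2) p.1

/-- The unfolded Coxeter matrix `m̌` (`0` denotes `∞`). -/
def mcheck (G : GeomSetting R ι S W) (p q : ι × S) : ℕ :=
  if p = q then 1
  else if G.rcheck p q = 0 then 2
  else if G.rcheck p q = -1 then 3
  else 0

/-- The Coxeter relations of the unfolded Coxeter system. -/
def rels (G : GeomSetting R ι S W) : Set (FreeGroup (ι × S)) :=
  Set.range fun pq : (ι × S) × (ι × S) =>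
    (FreeGroup.of pq.1 * FreeGroup.of pq.2) ^ G.mcheck pq.1 pq.2

/-- The unfolded Coxeter group `W̌`. -/
def Wcheck (G : GeomSetting R ι S W) : Type _ := PresentedGroup G.rels

instance (G : GeomSetting R ι S W) : Group G.Wcheck :=
  QuotientGroup.Quotient.group _

/-- The generators `(b, s)` of the unfolded Coxeter group. -/
def gen (G : GeomSetting R ι S W) (p : ι × S) : G.Wcheck := PresentedGroup.of p

end GeomSetting


variable {R : Type*} [Ring R] {ι : Type*} [Fintype ι] [DecidableEq ι]
  {S : Type*} [Fintype S] [DecidableEq S] {W : Type*} [Group W]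


/-- The `ℤ`-linear identification `RΛ_S ≅ ℤΛ_Š`, `b_i · α_s ↦ α_{(b_i, s)}`, in coordinates. -/
def GeomSetting.Psi (G : GeomSetting R ι S W) (v : S → R) : (ι × S) → ℤ :=
  fun p => G.FD.b.repr (v p.2) p.1

section Aux

open CoxeterSystem

variable {R : Type*} [Ring R] {ι : Type*} [Fintype ι] [DecidableEq ι]
  {S : Type*} [Fintype S] [DecidableEq S] {W : Type*} [Group W]

namespace GeomSetting

variable (G : GeomSetting R ι S W)

/-- The unfolded Coxeter matrix as a `CoxeterMatrix`, given symmetry. -/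
def MC (hsymm : ∀ p q : ι × S, G.mcheck p q = G.mcheck q p) : CoxeterMatrix (ι × S) where
  M := Matrix.of fun p q => G.mcheck p q
  isSymm := by ext p q; exact hsymm q p
  diagonal p := by simp [mcheck]
  off_diagonal p q hpq := by
    unfold mcheck
    simp only [Matrix.of_apply]
    rw [if_neg hpq]
    split <;> [skip; split] <;> simp

def csW (hsymm : ∀ p q : ι × S, G.mcheck p q = G.mcheck q p) :
    CoxeterSystem (G.MC hsymm) G.Wcheck := ⟨MulEquiv.refl _⟩

lemma csW_simple (hsymm : ∀ p q : ι × S, G.mcheck p q = G.mcheck q p) (p : ι × S) :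
    (G.csW hsymm).simple p = G.gen p := rfl

end GeomSetting
end Aux
section Aux2

open CoxeterSystem

variable {R : Type*} [Ring R] {ι : Type*} [Fintype ι] [DecidableEq ι]
  {S : Type*} [Fintype S] [DecidableEq S] {W : Type*} [Group W]

lemma sum_single_coeff {T : Type*} [Fintype T] [DecidableEq T] (c : T → ℤ) (p : T) (x y : ℤ) (q : T) (hpq : p ≠ q) :
    (∑ q', c q' * ((x • Pi.single p (1:ℤ) + y • Pi.single q (1:ℤ) : T → ℤ)) q') = x * c p + y * c q := by
  have : ∀ q' : T, c q' * ((x • Pi.single p (1:ℤ) + y • Pi.single q (1:ℤ) : T → ℤ)) q'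
      = (if q' = p then x * c p else 0) + (if q' = q then y * c q else 0) := by
    intro q'
    by_cases h1 : q' = p <;> by_cases h2 : q' = q <;>
      simp_all [Pi.single_apply] <;> ring
  rw [Finset.sum_congr rfl fun q' _ => this q', Finset.sum_add_distrib]
  simp


namespace GeomSetting

variable (G : GeomSetting R ι S W)

lemma rcheck_diag (p : ι × S) : G.rcheck p p = 2 := by simp [rcheck]

lemma rcheck_same {i j : ι} (s : S) (h : i ≠ j) : G.rcheck (i, s) (j, s) = 0 := by
  simp [rcheck, h]

lemma mcheck_diag (p : ι × S) : G.mcheck p p = 1 := by simp [mcheck]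

/-- expand the left factor of a product in the basis -/
lemma repr_mul_left (x r : R) (j : ι) :
    G.FD.b.repr (x * r) j = ∑ i, G.FD.b.repr x i * G.FD.b.repr (G.FD.b i * r) j := by
  set f : R →ₗ[ℤ] ℤ := (Finsupp.lapply j).comp G.FD.b.repr.toLinearMap with hf
  have h1 : ∀ y : R, G.FD.b.repr y j = f y := fun _ => rfl
  conv_lhs => rw [← G.FD.b.sum_repr x, Finset.sum_mul]
  rw [h1, map_sum]
  refine Finset.sum_congr rfl fun i _ => ?_
  rw [smul_mul_assoc, map_zsmul, smul_eq_mul, h1]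

/-- expand the right factor of a product in the basis -/
lemma repr_mul_right (x r : R) (j : ι) :
    G.FD.b.repr (x * r) j = ∑ k, G.FD.b.repr r k * G.FD.b.repr (x * G.FD.b k) j := by
  set f : R →ₗ[ℤ] ℤ := (Finsupp.lapply j).comp G.FD.b.repr.toLinearMap with hf
  have h1 : ∀ y : R, G.FD.b.repr y j = f y := fun _ => rfl
  conv_lhs => rw [← G.FD.b.sum_repr r, Finset.mul_sum]
  rw [h1, map_sum]
  refine Finset.sum_congr rfl fun k _ => ?_
  rw [mul_smul_comm, map_zsmul, smul_eq_mul, h1]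

lemma rcheck_nonpos {p q : ι × S} (h : p ≠ q) : G.rcheck p q ≤ 0 := by
  rcases p with ⟨i, s⟩; rcases q with ⟨j, t⟩
  by_cases hst : s = t
  · subst hst
    have hij : i ≠ j := fun hij => h (by rw [hij])
    rw [G.rcheck_same s hij]
  · show (if (s = t) then _ else G.FD.b.repr (G.FD.b j * G.cartan s t) i) ≤ 0
    rw [if_neg hst, G.repr_mul_right]
    refine Finset.sum_nonpos fun k _ => mul_nonpos_of_nonpos_of_nonneg ?_ (G.FD.c_nonneg j k i)
    have h2 := G.cartan_nonneg s t hst k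
    unfold FusionData.nonneg at h2
    rw [map_neg, Finsupp.neg_apply] at h2
    unfold cartan
    linarith

lemma gen_rel (p q : ι × S) : (G.gen p * G.gen q) ^ G.mcheck p q = 1 := by
  have h : ((G.gen p * G.gen q) ^ G.mcheck p q)
      = PresentedGroup.mk G.rels ((FreeGroup.of p * FreeGroup.of q) ^ G.mcheck p q) := by
    rw [map_pow, map_mul]; rfl
  rw [h]
  have hmem : (FreeGroup.of p * FreeGroup.of q) ^ G.mcheck p q ∈
      Subgroup.normalClosure G.rels :=
    Subgroup.subset_normalClosure ⟨(p, q), rfl⟩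
  exact (QuotientGroup.eq_one_iff _).mpr hmem

lemma gen_sq (p : ι × S) : G.gen p * G.gen p = 1 := by
  have := G.gen_rel p p
  rwa [G.mcheck_diag, pow_one] at this

section WithRho

variable (rhoL : G.Wcheck →* (((ι × S) → ℤ) ≃ₗ[ℤ] ((ι × S) → ℤ)))
  (hrhoL : ∀ (p : ι × S) (v : (ι × S) → ℤ),
      rhoL (G.gen p) v = v - (∑ q, G.rcheck p q * v q) • Pi.single p (1 : ℤ))

lemma rhoL_mul (u v : G.Wcheck) (x : (ι × S) → ℤ) :
    rhoL (u * v) x = rhoL u (rhoL v x) := by rw [map_mul]; rfl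

include hrhoL

lemma act_pair_left (p q : ι × S) (hpq : p ≠ q) (x y : ℤ) :
    rhoL (G.gen p) (x • Pi.single p (1:ℤ) + y • Pi.single q (1:ℤ))
      = (-x - G.rcheck p q * y) • Pi.single p (1:ℤ) + y • Pi.single q (1:ℤ) := by
  rw [hrhoL, sum_single_coeff (fun q' => G.rcheck p q') p x y q hpq,
    G.rcheck_diag]
  have : x * 2 + y * G.rcheck p q = x - (-x - G.rcheck p q * y) := by ring
  rw [this]
  module

lemma act_pair_right (p q : ι × S) (hpq : p ≠ q) (x y : ℤ) :
    rhoL (G.gen q) (x • Pi.single p (1:ℤ) + y • Pi.single q (1:ℤ))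
      = x • Pi.single p (1:ℤ) + (-y - G.rcheck q p * x) • Pi.single q (1:ℤ) := by
  rw [add_comm, G.act_pair_left rhoL hrhoL q p hpq.symm y x, add_comm]

end WithRho
end GeomSetting
end Aux2
section Aux3

open CoxeterSystem

variable {R : Type*} [Ring R] {ι : Type*} [Fintype ι] [DecidableEq ι]
  {S : Type*} [Fintype S] [DecidableEq S] {W : Type*} [Group W]

lemma single_as_pair {T : Type*} [DecidableEq T] (p q : T) :
    (Pi.single p (1:ℤ) : T → ℤ)
      = (1:ℤ) • (Pi.single p (1:ℤ) : T → ℤ) + (0:ℤ) • (Pi.single q (1:ℤ) : T → ℤ) := by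
  simp

lemma pair_eq {T : Type*} [DecidableEq T] {p q : T} (hpq : p ≠ q) {x y x' y' : ℤ}
    (h : x • (Pi.single p (1:ℤ) : T → ℤ) + y • (Pi.single q (1:ℤ) : T → ℤ)
       = x' • (Pi.single p (1:ℤ) : T → ℤ) + y' • (Pi.single q (1:ℤ) : T → ℤ)) :
    x = x' ∧ y = y' := by
  constructor
  · have h1 := congrFun h p
    simpa [Pi.single_apply, hpq, hpq.symm] using h1
  · have h2 := congrFun h q
    simpa [Pi.single_apply, hpq, hpq.symm] using h2

namespace GeomSetting

variable (G : GeomSetting R ι S W)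

lemma mcheck_eq_two_iff {p q : ι × S} (h : p ≠ q) : G.mcheck p q = 2 ↔ G.rcheck p q = 0 := by
  unfold mcheck; rw [if_neg h]; split_ifs with h1 h2 <;> simp_all

lemma mcheck_eq_three_iff {p q : ι × S} (h : p ≠ q) : G.mcheck p q = 3 ↔ G.rcheck p q = -1 := by
  unfold mcheck; rw [if_neg h]; split_ifs with h1 h2 <;> simp_all

lemma mcheck_eq_zero_iff {p q : ι × S} (h : p ≠ q) : G.mcheck p q = 0 ↔ G.rcheck p q ≤ -2 := by
  have := G.rcheck_nonpos h
  unfold mcheck; rw [if_neg h]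
  split_ifs with h1 h2
  · simp only [false_iff]; omega
  · simp only [false_iff]; omega
  · constructor <;> intro h' <;> omega

section WithRho

variable (rhoL : G.Wcheck →* (((ι × S) → ℤ) ≃ₗ[ℤ] ((ι × S) → ℤ)))
  (hrhoL : ∀ (p : ι × S) (v : (ι × S) → ℤ),
      rhoL (G.gen p) v = v - (∑ q, G.rcheck p q * v q) • Pi.single p (1 : ℤ))

include hrhoL

lemma sym0 {p q : ι × S} (hpq : p ≠ q) (h0 : G.rcheck p q = 0) : G.rcheck q p = 0 := by
  have hm : G.mcheck p q = 2 := (G.mcheck_eq_two_iff hpq).mpr h0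
  have hrel := G.gen_rel p q
  rw [hm] at hrel
  have happ : rhoL ((G.gen p * G.gen q) ^ 2) (Pi.single p (1:ℤ)) = Pi.single p (1:ℤ) := by
    rw [hrel, map_one]; rfl
  rw [show (G.gen p * G.gen q) ^ 2 = G.gen p * (G.gen q * (G.gen p * G.gen q)) by simp [pow_succ, mul_assoc]]
    at happ
  rw [G.rhoL_mul rhoL, G.rhoL_mul rhoL, G.rhoL_mul rhoL] at happ
  rw [single_as_pair p q] at happ
  rw [G.act_pair_right rhoL hrhoL p q hpq, G.act_pair_left rhoL hrhoL p q hpq,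
    G.act_pair_right rhoL hrhoL p q hpq, G.act_pair_left rhoL hrhoL p q hpq, h0] at happ
  obtain ⟨e1, e2⟩ := pair_eq hpq happ
  ring_nf at e1 e2
  omega

lemma sym1 {p q : ι × S} (hpq : p ≠ q) (h1 : G.rcheck p q = -1) : G.rcheck q p = -1 := by
  have hm : G.mcheck p q = 3 := (G.mcheck_eq_three_iff hpq).mpr h1
  have hrel := G.gen_rel p q
  rw [hm] at hrel
  have happ : rhoL ((G.gen p * G.gen q) ^ 3) (Pi.single p (1:ℤ)) = Pi.single p (1:ℤ) := by
    rw [hrel, map_one]; rfl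
  rw [show (G.gen p * G.gen q) ^ 3
      = G.gen p * (G.gen q * (G.gen p * (G.gen q * (G.gen p * G.gen q)))) by
        simp [pow_succ, mul_assoc]] at happ
  rw [G.rhoL_mul rhoL, G.rhoL_mul rhoL, G.rhoL_mul rhoL, G.rhoL_mul rhoL, G.rhoL_mul rhoL]
    at happ
  rw [single_as_pair p q] at happ
  rw [G.act_pair_right rhoL hrhoL p q hpq, G.act_pair_left rhoL hrhoL p q hpq,
    G.act_pair_right rhoL hrhoL p q hpq, G.act_pair_left rhoL hrhoL p q hpq,
    G.act_pair_right rhoL hrhoL p q hpq, G.act_pair_left rhoL hrhoL p q hpq, h1] at happ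
  obtain ⟨e1, e2⟩ := pair_eq hpq happ
  have hne0 : G.rcheck q p ≠ 0 := by
    intro hz
    have := G.sym0 rhoL hrhoL hpq.symm hz
    omega
  have key : (G.rcheck q p + 1) * (G.rcheck q p + 2) = 0 := by linear_combination e2 - e1
  rcases mul_eq_zero.mp key with h' | h'
  · omega
  · rw [show G.rcheck q p = -2 by omega] at e2
    norm_num at e2

lemma mcheck_symm (p q : ι × S) : G.mcheck p q = G.mcheck q p := by
  by_cases hpq : p = q
  · rw [hpq]
  have h1 := G.rcheck_nonpos hpq
  have h2 := G.rcheck_nonpos (Ne.symm hpq)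
  by_cases hz : G.rcheck p q = 0
  · have := G.sym0 rhoL hrhoL hpq hz
    rw [(G.mcheck_eq_two_iff hpq).mpr hz, ((G.mcheck_eq_two_iff (Ne.symm hpq)).mpr this).symm]
  by_cases ho : G.rcheck p q = -1
  · have := G.sym1 rhoL hrhoL hpq ho
    rw [(G.mcheck_eq_three_iff hpq).mpr ho,
      ((G.mcheck_eq_three_iff (Ne.symm hpq)).mpr this).symm]
  · have hle : G.rcheck p q ≤ -2 := by omega
    have hle' : G.rcheck q p ≤ -2 := by
      by_contra hcon
      have : G.rcheck q p = 0 ∨ G.rcheck q p = -1 := by omega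
      rcases this with h' | h'
      · have := G.sym0 rhoL hrhoL (Ne.symm hpq) h'; omega
      · have := G.sym1 rhoL hrhoL (Ne.symm hpq) h'; omega
    rw [(G.mcheck_eq_zero_iff hpq).mpr hle, ((G.mcheck_eq_zero_iff (Ne.symm hpq)).mpr hle').symm]

end WithRho
end GeomSetting
end Aux3
section Tits

set_option linter.unusedSectionVars false

open CoxeterSystem

lemma sum_mul_single {B : Type*} [Fintype B] [DecidableEq B] (c : B → ℤ) (p : B) :
    (∑ q', c q' * (Pi.single p (1:ℤ) : B → ℤ) q') = c p := by
  rw [Finset.sum_eq_single p (fun b _ hb => by simp [Pi.single_eq_of_ne hb])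
    (fun h => absurd (Finset.mem_univ p) h)]
  simp

variable {B : Type*} [Fintype B] [DecidableEq B] {W' : Type*} [Group W']
  {M : CoxeterMatrix B} (cs : CoxeterSystem M W')
  (A : B → B → ℤ)
  (ρ : W' →* ((B → ℤ) ≃ₗ[ℤ] (B → ℤ)))
  (hdiag : ∀ p, A p p = 2)
  (hM2 : ∀ p q : B, p ≠ q → (M p q = 2 ↔ A p q = 0))
  (hM3 : ∀ p q : B, p ≠ q → (M p q = 3 ↔ A p q = -1))
  (hM0 : ∀ p q : B, p ≠ q → (M p q = 0 ↔ A p q ≤ -2))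
  (hoff : ∀ p q : B, p ≠ q → A p q ≤ 0)
  (hrho : ∀ (p : B) (v : B → ℤ),
    ρ (cs.simple p) v = v - (∑ q, A p q * v q) • Pi.single p (1:ℤ))

lemma tits_rho_mul (u v : W') (x : B → ℤ) : ρ (u * v) x = ρ u (ρ v x) := by
  rw [map_mul]; rfl

include hdiag hM2 hM3 hM0 hoff hrho

lemma tits_act_left (p q : B) (hpq : p ≠ q) (x y : ℤ) :
    ρ (cs.simple p) (x • (Pi.single p (1:ℤ) : B → ℤ) + y • (Pi.single q (1:ℤ) : B → ℤ))
      = (-x - A p q * y) • (Pi.single p (1:ℤ) : B → ℤ)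
        + y • (Pi.single q (1:ℤ) : B → ℤ) := by
  rw [hrho, sum_single_coeff (fun q' => A p q') p x y q hpq, hdiag]
  have : x * 2 + y * A p q = x - (-x - A p q * y) := by ring
  rw [this]
  module

lemma tits_act_right (p q : B) (hpq : p ≠ q) (x y : ℤ) :
    ρ (cs.simple q) (x • (Pi.single p (1:ℤ) : B → ℤ) + y • (Pi.single q (1:ℤ) : B → ℤ))
      = x • (Pi.single p (1:ℤ) : B → ℤ)
        + (-y - A q p * x) • (Pi.single q (1:ℤ) : B → ℤ) := by
  rw [add_comm, tits_act_left cs A ρ hdiag hM2 hM3 hM0 hoff hrho q p hpq.symm y x, add_comm]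

lemma tits_sym0 {p q : B} (hpq : p ≠ q) (h : A p q = 0) : A q p = 0 :=
  (hM2 q p hpq.symm).mp (by rw [M.symmetric q p]; exact (hM2 p q hpq).mpr h)

lemma tits_sym1 {p q : B} (hpq : p ≠ q) (h : A p q = -1) : A q p = -1 :=
  (hM3 q p hpq.symm).mp (by rw [M.symmetric q p]; exact (hM3 p q hpq).mpr h)

lemma tits_sym2 {p q : B} (hpq : p ≠ q) (h : A p q ≤ -2) : A q p ≤ -2 :=
  (hM0 q p hpq.symm).mp (by rw [M.symmetric q p]; exact (hM0 p q hpq).mpr h)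

omit hdiag hM2 hM3 hM0 hoff hrho in
lemma alt_two_step (p q : B) (k : ℕ) :
    cs.wordProd (alternatingWord p q (k + 2))
      = cs.wordProd (alternatingWord p q k) * (cs.simple p * cs.simple q) := by
  rw [alternatingWord_succ p q (k+1), alternatingWord_succ q p k,
    cs.wordProd_concat, cs.wordProd_concat, mul_assoc]

omit hdiag hM2 hM3 hM0 hoff hrho in
lemma braid2 {p q : B} (hM : M p q = 2) :
    cs.simple p * (cs.simple q * cs.simple p) = cs.simple q := by
  have h := cs.simple_mul_simple_pow p q
  rw [hM, pow_two] at h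
  have h2 := congrArg (fun z => z * cs.simple q) h
  simpa [mul_assoc] using h2

omit hdiag hM2 hM3 hM0 hoff hrho in
lemma braid3 {p q : B} (hM : M q p = 3) :
    cs.simple q * (cs.simple p * (cs.simple q * cs.simple p))
      = cs.simple p * cs.simple q := by
  have h := cs.simple_mul_simple_pow q p
  rw [hM] at h
  have h2 : (cs.simple q * cs.simple p) ^ 2 = (cs.simple q * cs.simple p)⁻¹ := by
    apply eq_inv_of_mul_eq_one_left
    rw [← pow_succ]
    exact h
  rw [mul_inv_rev, cs.inv_simple, cs.inv_simple, pow_two] at h2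
  simpa [mul_assoc] using h2

omit hdiag hM2 hM3 hM0 hoff hrho in
lemma tits_strip : ∀ (n : ℕ) (w : W') (p q : B), p ≠ q → cs.length w = n →
    cs.IsRightDescent w q →
    ∃ (u : W') (k : ℕ), 1 ≤ k ∧ w = u * cs.wordProd (alternatingWord p q k) ∧
      cs.length u + k = n ∧ ¬ cs.IsRightDescent u p ∧ ¬ cs.IsRightDescent u q := by
  intro n
  induction n using Nat.strong_induction_on with
  | _ n ih =>
    intro w p q hpq hlen hdesc
    have hlen1 : cs.length (w * cs.simple q) + 1 = n := by
      rw [← hlen]; exact cs.isRightDescent_iff.mp hdesc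
    have hww : w = (w * cs.simple q) * cs.simple q := by
      rw [mul_assoc, cs.simple_mul_simple_self, mul_one]
    by_cases hd : cs.IsRightDescent (w * cs.simple q) p
    · obtain ⟨u, k, hk, hw, hl, h1, h2⟩ :=
        ih (cs.length (w * cs.simple q)) (by omega) (w * cs.simple q) q p hpq.symm rfl hd
      refine ⟨u, k + 1, by omega, ?_, by omega, h2, h1⟩
      rw [alternatingWord_succ p q k, cs.wordProd_concat, ← mul_assoc, ← hw, ← hww]
    · refine ⟨w * cs.simple q, 1, le_refl 1, ?_, by omega, hd,
        cs.isRightDescent_iff_not_isRightDescent_mul.mp hdesc⟩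
      have h1 : alternatingWord p q 1 = [q] := rfl
      rw [h1, cs.wordProd_singleton, ← hww]

lemma tits_L2 (p q : B) (hpq : p ≠ q) (k : ℕ)
    (hk2 : A p q = 0 → k ≤ 1) (hk3 : A p q = -1 → k ≤ 2) :
    ∃ a b : ℤ, 0 ≤ a ∧ 0 ≤ b ∧
      ρ (cs.wordProd (alternatingWord p q k)) (Pi.single p (1:ℤ))
        = a • (Pi.single p (1:ℤ) : B → ℤ) + b • (Pi.single q (1:ℤ) : B → ℤ) := by
  have ek0 : ρ (cs.wordProd (alternatingWord p q 0)) (Pi.single p (1:ℤ))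
      = (1:ℤ) • (Pi.single p (1:ℤ) : B → ℤ) + (0:ℤ) • (Pi.single q (1:ℤ) : B → ℤ) := by
    rw [show alternatingWord p q 0 = ([] : List B) from rfl, cs.wordProd_nil, map_one]
    exact single_as_pair p q
  have ek1 : ρ (cs.wordProd (alternatingWord p q 1)) (Pi.single p (1:ℤ))
      = (1:ℤ) • (Pi.single p (1:ℤ) : B → ℤ)
        + (-(0:ℤ) - A q p * 1) • (Pi.single q (1:ℤ) : B → ℤ) := by
    conv_lhs => rw [show alternatingWord p q 1 = [q] from rfl, cs.wordProd_singleton,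
      single_as_pair p q]
    exact tits_act_right cs A ρ hdiag hM2 hM3 hM0 hoff hrho p q hpq 1 0
  have ek2 : ρ (cs.wordProd (alternatingWord p q 2)) (Pi.single p (1:ℤ))
      = (-(1:ℤ) - A p q * (-(0:ℤ) - A q p * 1)) • (Pi.single p (1:ℤ) : B → ℤ)
        + (-(0:ℤ) - A q p * 1) • (Pi.single q (1:ℤ) : B → ℤ) := by
    rw [show alternatingWord p q 2 = [p, q] from rfl, cs.wordProd_cons, cs.wordProd_singleton,
      tits_rho_mul]
    conv_lhs => rw [single_as_pair p q]
    rw [tits_act_right cs A ρ hdiag hM2 hM3 hM0 hoff hrho p q hpq,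
      tits_act_left cs A ρ hdiag hM2 hM3 hM0 hoff hrho p q hpq]
  rcases show A p q = 0 ∨ A p q = -1 ∨ A p q ≤ -2 by have := hoff p q hpq; omega
    with h0 | h1 | h2
  · have h0' := tits_sym0 cs A ρ hdiag hM2 hM3 hM0 hoff hrho hpq h0
    have hk := hk2 h0
    interval_cases k
    · exact ⟨1, 0, by norm_num, le_refl 0, ek0⟩
    · exact ⟨1, -(0:ℤ) - A q p * 1, by norm_num, by rw [h0']; norm_num, ek1⟩
  · have h1' := tits_sym1 cs A ρ hdiag hM2 hM3 hM0 hoff hrho hpq h1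
    have hk := hk3 h1
    interval_cases k
    · exact ⟨1, 0, by norm_num, le_refl 0, ek0⟩
    · exact ⟨1, -(0:ℤ) - A q p * 1, by norm_num, by rw [h1']; norm_num, ek1⟩
    · exact ⟨-(1:ℤ) - A p q * (-(0:ℤ) - A q p * 1), -(0:ℤ) - A q p * 1,
        by rw [h1, h1']; norm_num, by rw [h1']; norm_num, ek2⟩
  · have h2' := tits_sym2 cs A ρ hdiag hM2 hM3 hM0 hoff hrho hpq h2
    have main : ∀ m : ℕ, ∃ a b : ℤ, 0 ≤ a ∧ 0 ≤ b ∧ (Even m → b ≤ a) ∧ (¬ Even m → a ≤ b) ∧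
        ρ (cs.wordProd (alternatingWord p q m)) (Pi.single p (1:ℤ))
          = a • (Pi.single p (1:ℤ) : B → ℤ) + b • (Pi.single q (1:ℤ) : B → ℤ) := by
      intro m
      induction m with
      | zero =>
        exact ⟨1, 0, by norm_num, le_refl 0, fun _ => by norm_num,
          fun h => absurd (by simp) h, ek0⟩
      | succ m ihm =>
        obtain ⟨a, b, ha, hb, habe, habo, he⟩ := ihm
        have hw : cs.wordProd (alternatingWord p q (m+1))
            = cs.simple (if Even m then q else p) * cs.wordProd (alternatingWord p q m) := by
          rw [alternatingWord_succ', cs.wordProd_cons]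
        by_cases hev : Even m
        · rw [if_pos hev] at hw
          have hba := habe hev
          have hx : 0 ≤ (-A q p - 2) * a := mul_nonneg (by linarith) ha
          refine ⟨a, -b - A q p * a, ha, by nlinarith, fun h => absurd h (by
              simp [Nat.even_add_one, hev]), fun _ => by nlinarith, ?_⟩
          rw [hw, tits_rho_mul, he,
            tits_act_right cs A ρ hdiag hM2 hM3 hM0 hoff hrho p q hpq]
        · rw [if_neg hev] at hw
          have hab := habo hev
          have hx : 0 ≤ (-A p q - 2) * b := mul_nonneg (by linarith) hb
          refine ⟨-a - A p q * b, b, by nlinarith, hb, fun _ => by nlinarith, fun h => absurd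
              (Nat.even_add_one.mpr hev) h, ?_⟩
          rw [hw, tits_rho_mul, he,
            tits_act_left cs A ρ hdiag hM2 hM3 hM0 hoff hrho p q hpq]
    obtain ⟨a, b, ha, hb, _, _, he⟩ := main k
    exact ⟨a, b, ha, hb, he⟩

end Tits
section Tits2

set_option linter.unusedSectionVars false

open CoxeterSystem

variable {B : Type*} [Fintype B] [DecidableEq B] {W' : Type*} [Group W']
  {M : CoxeterMatrix B} (cs : CoxeterSystem M W')
  (A : B → B → ℤ)
  (ρ : W' →* ((B → ℤ) ≃ₗ[ℤ] (B → ℤ)))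
  (hdiag : ∀ p, A p p = 2)
  (hM2 : ∀ p q : B, p ≠ q → (M p q = 2 ↔ A p q = 0))
  (hM3 : ∀ p q : B, p ≠ q → (M p q = 3 ↔ A p q = -1))
  (hM0 : ∀ p q : B, p ≠ q → (M p q = 0 ↔ A p q ≤ -2))
  (hoff : ∀ p q : B, p ≠ q → A p q ≤ 0)
  (hrho : ∀ (p : B) (v : B → ℤ),
    ρ (cs.simple p) v = v - (∑ q, A p q * v q) • Pi.single p (1:ℤ))

include hdiag hM2 hM3 hM0 hoff hrho

lemma tits_pos : ∀ (n : ℕ) (w : W') (p : B), cs.length w = n → ¬ cs.IsRightDescent w p →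
    ∀ x, 0 ≤ ρ w (Pi.single p (1:ℤ)) x := by
  intro n
  induction n using Nat.strong_induction_on with
  | _ n ih =>
    intro w p hlen hnd x
    rcases Nat.eq_zero_or_pos n with h0 | hpos
    · have hw1 : w = 1 := cs.length_eq_zero_iff.mp (by omega)
      subst hw1
      rw [map_one]
      rw [show ((1 : (B → ℤ) ≃ₗ[ℤ] (B → ℤ))) (Pi.single p (1:ℤ)) = Pi.single p (1:ℤ) from rfl,
        Pi.single_apply]
      split <;> norm_num
    · have hw1 : w ≠ 1 := by
        intro h; rw [h, cs.length_one] at hlen; omega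
      obtain ⟨q, hq⟩ := cs.exists_rightDescent_of_ne_one hw1
      have hpq : p ≠ q := by rintro rfl; exact hnd hq
      obtain ⟨u, k, hk1, hw, hlu, hup, huq⟩ := tits_strip cs n w p q hpq hlen hq
      have hlwp : cs.length (w * cs.simple p) = n + 1 := by
        rw [← hlen]; exact cs.not_isRightDescent_iff.mp hnd
      -- constraint for M p q = 2
      have hk2 : A p q = 0 → k ≤ 1 := by
        intro hA
        by_contra hcon
        push_neg at hcon
        obtain ⟨k', rfl⟩ : ∃ k', k = k' + 2 := ⟨k - 2, by omega⟩
        have hMpq : M p q = 2 := (hM2 p q hpq).mpr hA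
        have hsuf : cs.wordProd (alternatingWord p q (k' + 2)) * cs.simple p
            = cs.wordProd (alternatingWord p q k') * cs.simple q := by
          rw [alt_two_step cs p q k', mul_assoc, mul_assoc, braid2 cs hMpq]
        have hb : cs.length (w * cs.simple p)
            ≤ cs.length u + (cs.length (cs.wordProd (alternatingWord p q k')) + 1) := by
          rw [hw, mul_assoc, hsuf, ← mul_assoc]
          calc cs.length (u * cs.wordProd (alternatingWord p q k') * cs.simple q)
              ≤ cs.length (u * cs.wordProd (alternatingWord p q k'))
                  + cs.length (cs.simple q) := cs.length_mul_le _ _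
            _ ≤ cs.length u + cs.length (cs.wordProd (alternatingWord p q k'))
                  + cs.length (cs.simple q) := by
                have := cs.length_mul_le u (cs.wordProd (alternatingWord p q k'))
                omega
            _ = cs.length u + (cs.length (cs.wordProd (alternatingWord p q k')) + 1) := by
                rw [cs.length_simple]; omega
        have hwle := cs.length_wordProd_le (alternatingWord p q k')
        rw [length_alternatingWord] at hwle
        omega
      -- constraint for M p q = 3
      have hk3 : A p q = -1 → k ≤ 2 := by
        intro hA
        by_contra hcon
        push_neg at hcon
        obtain ⟨k', rfl⟩ : ∃ k', k = k' + 3 := ⟨k - 3, by omega⟩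
        have hApq' : A q p = -1 := tits_sym1 cs A ρ hdiag hM2 hM3 hM0 hoff hrho hpq hA
        have hMqp : M q p = 3 := (hM3 q p hpq.symm).mpr hApq'
        have hsuf : cs.wordProd (alternatingWord p q (k' + 3)) * cs.simple p
            = cs.wordProd (alternatingWord q p k') * (cs.simple p * cs.simple q) := by
          have h1 : alternatingWord p q (k' + 3) = (alternatingWord q p (k' + 2)).concat q :=
            alternatingWord_succ p q (k' + 2)
          rw [h1, cs.wordProd_concat, alt_two_step cs q p k']
          rw [mul_assoc, mul_assoc, mul_assoc]
          congr 1
          rw [← mul_assoc, ← mul_assoc]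
          have := braid3 cs (p := p) (q := q) hMqp
          calc cs.simple q * cs.simple p * cs.simple q * cs.simple p
              = cs.simple q * (cs.simple p * (cs.simple q * cs.simple p)) := by
                rw [mul_assoc, mul_assoc]
            _ = cs.simple p * cs.simple q := this
        have hb : cs.length (w * cs.simple p)
            ≤ cs.length u + (cs.length (cs.wordProd (alternatingWord q p k')) + 2) := by
          rw [hw, mul_assoc, hsuf, ← mul_assoc]
          calc cs.length (u * cs.wordProd (alternatingWord q p k')
                  * (cs.simple p * cs.simple q))
              ≤ cs.length (u * cs.wordProd (alternatingWord q p k'))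
                  + cs.length (cs.simple p * cs.simple q) := cs.length_mul_le _ _
            _ ≤ cs.length u + cs.length (cs.wordProd (alternatingWord q p k'))
                  + cs.length (cs.simple p * cs.simple q) := by
                have := cs.length_mul_le u (cs.wordProd (alternatingWord q p k'))
                omega
            _ ≤ cs.length u + (cs.length (cs.wordProd (alternatingWord q p k')) + 2) := by
                have h2 := cs.length_mul_le (cs.simple p) (cs.simple q)
                rw [cs.length_simple, cs.length_simple] at h2
                omega
        have hwle := cs.length_wordProd_le (alternatingWord q p k')
        rw [length_alternatingWord] at hwle
        omega
      obtain ⟨a, b, ha, hb, he⟩ :=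
        tits_L2 cs A ρ hdiag hM2 hM3 hM0 hoff hrho p q hpq k hk2 hk3
      have hsplit : ρ w (Pi.single p (1:ℤ))
          = a • ρ u (Pi.single p (1:ℤ)) + b • ρ u (Pi.single q (1:ℤ)) := by
        rw [hw, tits_rho_mul, he, map_add, map_smul, map_smul]
      rw [hsplit]
      have hp1 := ih (cs.length u) (by omega) u p rfl hup x
      have hp2 := ih (cs.length u) (by omega) u q rfl huq x
      have : (a • ρ u (Pi.single p (1:ℤ)) + b • ρ u (Pi.single q (1:ℤ))) x
          = a * ρ u (Pi.single p (1:ℤ)) x + b * ρ u (Pi.single q (1:ℤ)) x := rfl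
      rw [this]
      exact add_nonneg (mul_nonneg ha hp1) (mul_nonneg hb hp2)

lemma tits_faithful (z : W') (hz : ρ z = 1) : z = 1 := by
  by_contra hne
  obtain ⟨q, hq⟩ := cs.exists_rightDescent_of_ne_one hne
  have hu : ¬ cs.IsRightDescent (z * cs.simple q) q :=
    cs.isRightDescent_iff_not_isRightDescent_mul.mp hq
  have h1 := tits_pos cs A ρ hdiag hM2 hM3 hM0 hoff hrho
    (cs.length (z * cs.simple q)) (z * cs.simple q) q rfl hu q
  have h2 : ρ z (Pi.single q (1:ℤ)) = Pi.single q (1:ℤ) := by rw [hz]; rfl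
  have h3 : ρ (cs.simple q) (Pi.single q (1:ℤ)) = - Pi.single q (1:ℤ) := by
    rw [hrho]
    rw [sum_mul_single (fun q' => A q q') q, hdiag]
    module
  have h4 : ρ z (Pi.single q (1:ℤ)) = - ρ (z * cs.simple q) (Pi.single q (1:ℤ)) := by
    have hzz : z = (z * cs.simple q) * cs.simple q := by
      rw [mul_assoc, cs.simple_mul_simple_self, mul_one]
    conv_lhs => rw [hzz]
    rw [tits_rho_mul, h3, map_neg]
  rw [h2] at h4
  have h5 := congrFun h4 q
  have h6 : (Pi.single q (1:ℤ) : B → ℤ) q = 1 := Pi.single_eq_same q 1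
  rw [show (- ρ (z * cs.simple q) (Pi.single q (1:ℤ))) q
      = - (ρ (z * cs.simple q) (Pi.single q (1:ℤ)) q) from rfl, h6] at h5
  linarith

end Tits2
section Aux6

set_option linter.unusedSectionVars false

open CoxeterSystem

variable {R : Type*} [Ring R] {ι : Type*} [Fintype ι] [DecidableEq ι]
  {S : Type*} [Fintype S] [DecidableEq S] {W : Type*} [Group W]

namespace GeomSetting

variable (G : GeomSetting R ι S W)

lemma unit_inv : G.FD.inv G.FD.unit = G.FD.unit := by
  have h1 : G.FD.b G.FD.unit * G.FD.b G.FD.unit = G.FD.b G.FD.unit := by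
    rw [G.FD.b_unit, one_mul]
  have h2 : G.FD.b.repr (G.FD.b G.FD.unit * G.FD.b G.FD.unit) G.FD.unit = 1 := by
    rw [h1, G.FD.b.repr_self]
    simp
  exact ((G.FD.c_unit_iff _ _).mp h2).symm

lemma star_one : G.FD.star 1 = 1 := by
  rw [← G.FD.b_unit, G.FD.star_basis, G.unit_inv, G.FD.b_unit]

lemma pi_decomp (v : S → R) : ∑ t, v t • simRoot R t = v := by
  funext u
  rw [Finset.sum_apply]
  rw [Finset.sum_eq_single u (fun t _ ht => by
    show v t • (Pi.single t (1:R) : S → R) u = 0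
    rw [Pi.single_eq_of_ne (Ne.symm ht), smul_zero])
    (fun h => absurd (Finset.mem_univ u) h)]
  show v u • (Pi.single u (1:R) : S → R) u = v u
  rw [Pi.single_eq_same, smul_eq_mul, mul_one]

lemma B_expand (s : S) (v : S → R) :
    G.B (simRoot R s) v = ∑ t, v t * G.cartan s t := by
  set f : (S → R) →+ R :=
    AddMonoidHom.mk' (fun w => G.B (simRoot R s) w) (fun a b => G.B_add_right _ a b) with hf
  have h0 : f v = f (∑ t, v t • simRoot R t) := by rw [pi_decomp v]
  have h1 : G.B (simRoot R s) v = f v := rfl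
  rw [h1, h0, map_sum]
  refine Finset.sum_congr rfl fun t _ => ?_
  show G.B (simRoot R s) (v t • simRoot R t) = v t * G.cartan s t
  calc G.B (simRoot R s) (v t • simRoot R t)
      = G.B ((1:R) • simRoot R s) (v t • simRoot R t) := by rw [one_smul]
    _ = v t * G.B (simRoot R s) (simRoot R t) * G.FD.star 1 := G.B_sesq 1 (v t) s t
    _ = v t * G.cartan s t := by rw [G.star_one, mul_one]; rfl

lemma repr_B (s : S) (v : S → R) (j : ι) :
    G.FD.b.repr (G.B (simRoot R s) v) j
      = ∑ q : ι × S, G.rcheck (j, s) q * G.FD.b.repr (v q.2) q.1 := by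
  rw [G.B_expand]
  set f : R →ₗ[ℤ] ℤ := (Finsupp.lapply j).comp G.FD.b.repr.toLinearMap with hf
  have h1 : ∀ y : R, G.FD.b.repr y j = f y := fun _ => rfl
  rw [h1, map_sum, Fintype.sum_prod_type, Finset.sum_comm]
  refine Finset.sum_congr rfl fun t _ => ?_
  by_cases hts : s = t
  · subst hts
    have h3 : ∀ i, G.rcheck (j, s) (i, s) = if j = i then 2 else 0 := fun i => by
      show (if s = s then (if j = i then 2 else 0) else _) = _
      rw [if_pos rfl]
    rw [show G.cartan s s = (2:R) from G.cartan_diag s, mul_two, map_add, ← h1,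
      show (∑ i, G.rcheck (j, s) (i, s) * G.FD.b.repr (v s) i)
        = ∑ i, (if j = i then 2 * G.FD.b.repr (v s) i else 0) from
        Finset.sum_congr rfl fun i _ => by rw [h3 i, ite_mul, zero_mul],
      Finset.sum_ite_eq, if_pos (Finset.mem_univ j), two_mul]
  · rw [← h1, G.repr_mul_left (v t) (G.cartan s t) j]
    refine Finset.sum_congr rfl fun i _ => ?_
    have hr : G.rcheck (j, s) (i, t) = G.FD.b.repr (G.FD.b i * G.cartan s t) j := by
      show (if s = t then _ else _) = _
      rw [if_neg hts]
    rw [hr, mul_comm]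

section WithRho2

variable (rhoL : G.Wcheck →* (((ι × S) → ℤ) ≃ₗ[ℤ] ((ι × S) → ℤ)))
  (hrhoL : ∀ (p : ι × S) (v : (ι × S) → ℤ),
      rhoL (G.gen p) v = v - (∑ q, G.rcheck p q * v q) • Pi.single p (1 : ℤ))

include hrhoL

lemma rhoL_genlist (s : S) : ∀ (l : List ι), l.Nodup → ∀ x : (ι × S) → ℤ,
    rhoL ((l.map fun i => G.gen (i, s)).prod) x
      = x - (l.map fun i =>
          (∑ q, G.rcheck (i, s) q * x q) • (Pi.single (i, s) (1:ℤ) : (ι × S) → ℤ)).sum := by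
  intro l
  induction l with
  | nil => intro _ x; simp
  | cons i l ihl =>
    intro hnd x
    have hi : i ∉ l := (List.nodup_cons.mp hnd).1
    have hl : l.Nodup := (List.nodup_cons.mp hnd).2
    set C : ((ι × S) → ℤ) →+ ℤ :=
      AddMonoidHom.mk' (fun y => ∑ q, G.rcheck (i, s) q * y q)
        (fun a b => by
          show (∑ q, G.rcheck (i,s) q * (a q + b q)) = _
          rw [← Finset.sum_add_distrib]
          exact Finset.sum_congr rfl fun q _ => mul_add _ _ _) with hC
    set T : (ι × S) → ℤ := (l.map fun i' =>
        (∑ q, G.rcheck (i', s) q * x q) • (Pi.single (i', s) (1:ℤ) : (ι × S) → ℤ)).sum with hT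
    have hCT : C T = 0 := by
      rw [hT, map_list_sum, List.map_map]
      apply List.sum_eq_zero
      intro y hy
      rw [List.mem_map] at hy
      obtain ⟨i', hi', rfl⟩ := hy
      show C ((∑ q, G.rcheck (i', s) q * x q) • (Pi.single (i', s) (1:ℤ) : (ι × S) → ℤ)) = 0
      have hii' : i ≠ i' := fun h => hi (h ▸ hi')
      have hCs : C (Pi.single (i', s) (1:ℤ) : (ι × S) → ℤ) = G.rcheck (i, s) (i', s) :=
        sum_mul_single (fun q => G.rcheck (i, s) q) (i', s)
      rw [map_zsmul, hCs, G.rcheck_same s hii', smul_zero]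
    have hCx : ∀ y : (ι × S) → ℤ, (∑ q, G.rcheck (i, s) q * y q) = C y := fun _ => rfl
    rw [List.map_cons, List.prod_cons, G.rhoL_mul rhoL, ihl hl x, hrhoL, List.map_cons,
      List.sum_cons]
    rw [hCx, hCx, map_sub, hCT, sub_zero]
    abel

lemma rhoL_Ps (s : S) (x : (ι × S) → ℤ) :
    rhoL (((Finset.univ : Finset ι).toList.map fun i => G.gen (i, s)).prod) x
      = x - ∑ i : ι, (∑ q, G.rcheck (i, s) q * x q)
          • (Pi.single (i, s) (1:ℤ) : (ι × S) → ℤ) := by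
  rw [G.rhoL_genlist rhoL hrhoL s Finset.univ.toList Finset.univ.nodup_toList x,
    Finset.sum_map_toList]

lemma Psi_rep_simple (s : S) (v : S → R) :
    G.Psi (G.rep (G.cs.simple s) v)
      = rhoL (((Finset.univ : Finset ι).toList.map fun i => G.gen (i, s)).prod) (G.Psi v) := by
  rw [G.rhoL_Ps rhoL hrhoL]
  funext p
  rcases p with ⟨j, u⟩
  show G.FD.b.repr ((G.rep (G.cs.simple s) v) u) j = _
  rw [G.rep_simple]
  have hL : (v - G.B (simRoot R s) v • simRoot R s) u
      = v u - (if u = s then G.B (simRoot R s) v else 0) := by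
    rw [Pi.sub_apply]
    congr 1
    show G.B (simRoot R s) v • (Pi.single s (1:R) : S → R) u = _
    rw [Pi.single_apply, smul_ite, smul_eq_mul, mul_one, smul_zero]
  rw [hL, map_sub]
  have hsum : (∑ i : ι, (∑ q, G.rcheck (i, s) q * G.Psi v q)
        • (Pi.single (i, s) (1:ℤ) : (ι × S) → ℤ)) (j, u)
      = if u = s then (∑ q, G.rcheck (j, s) q * G.Psi v q) else 0 := by
    rw [Finset.sum_apply]
    by_cases hus : u = s
    · subst hus
      rw [if_pos rfl]
      rw [Finset.sum_eq_single j (fun i _ hij => by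
        rw [Pi.smul_apply, Pi.single_eq_of_ne (by simp [Ne.symm hij]), smul_zero])
        (fun h => absurd (Finset.mem_univ j) h)]
      rw [Pi.smul_apply, Pi.single_eq_same, smul_eq_mul, mul_one]
    · rw [if_neg hus]
      apply Finset.sum_eq_zero
      intro i _
      rw [Pi.smul_apply, Pi.single_eq_of_ne (by simp [hus]), smul_zero]
  show G.FD.b.repr (v u) j - G.FD.b.repr (if u = s then G.B (simRoot R s) v else 0) j
      = G.Psi v (j, u) - _
  rw [hsum]
  congr 1
  by_cases hus : u = s
  · subst hus
    rw [if_pos rfl, if_pos rfl, G.repr_B]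
    rfl
  · rw [if_neg hus, if_neg hus, map_zero]
    rfl

end WithRho2

lemma Psi_bijective : Function.Bijective G.Psi := by
  constructor
  · intro v v' h
    funext u
    apply G.FD.b.repr.injective
    apply Finsupp.ext
    intro i
    exact congrFun h (i, u)
  · intro f
    refine ⟨fun u => G.FD.b.repr.symm (Finsupp.equivFunOnFinite.symm fun i => f (i, u)), ?_⟩
    funext p
    rcases p with ⟨i, u⟩
    show G.FD.b.repr (G.FD.b.repr.symm _) i = f (i, u)
    rw [LinearEquiv.apply_symm_apply]
    simp

lemma gen_comm (s : S) (i j : ι) : Commute (G.gen (i, s)) (G.gen (j, s)) := by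
  by_cases h : i = j
  · subst h; exact Commute.refl _
  have hii : ((i, s) : ι × S) ≠ (j, s) := by simp [h]
  have hm : G.mcheck (i, s) (j, s) = 2 :=
    (G.mcheck_eq_two_iff hii).mpr (G.rcheck_same s h)
  have hrel := G.gen_rel (i, s) (j, s)
  rw [hm, pow_two] at hrel
  have hinv : (G.gen (i, s) * G.gen (j, s))⁻¹ = G.gen (i, s) * G.gen (j, s) :=
    inv_eq_of_mul_eq_one_right hrel
  have hi : (G.gen (i, s))⁻¹ = G.gen (i, s) := inv_eq_of_mul_eq_one_right (G.gen_sq _)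
  have hj : (G.gen (j, s))⁻¹ = G.gen (j, s) := inv_eq_of_mul_eq_one_right (G.gen_sq _)
  show G.gen (i, s) * G.gen (j, s) = G.gen (j, s) * G.gen (i, s)
  calc G.gen (i, s) * G.gen (j, s) = (G.gen (i, s) * G.gen (j, s))⁻¹ := hinv.symm
    _ = (G.gen (j, s))⁻¹ * (G.gen (i, s))⁻¹ := mul_inv_rev _ _
    _ = G.gen (j, s) * G.gen (i, s) := by rw [hi, hj]

end GeomSetting
end Aux6
/-- **Proposition (unfolding homomorphism).** The map `s ↦ ∏_{b ∈ 𝔅} (b, s)` extends to a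
group homomorphism `φ : W → W̌` (the factors pairwise commute), and the `ℤ`-linear
isomorphism `Ψ : RΛ_S → ℤΛ_Š`, `b·α_s ↦ α_{(b,s)}`, is `W`-equivariant with respect to `φ`. -/
theorem unfolding_homomorphism_exists (G : GeomSetting R ι S W)
    (rhoL : G.Wcheck →* (((ι × S) → ℤ) ≃ₗ[ℤ] ((ι × S) → ℤ)))
    (hrhoL : ∀ (p : ι × S) (v : (ι × S) → ℤ),
      rhoL (G.gen p) v = v - (∑ q, G.rcheck p q * v q) • Pi.single p (1 : ℤ)) :
    (∀ (s : S) (i j : ι), Commute (G.gen (i, s)) (G.gen (j, s)))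
    ∧ Function.Bijective G.Psi
    ∧ ∃ phi : W →* G.Wcheck,
        (∀ s : S, phi (G.cs.simple s)
            = ((Finset.univ : Finset ι).toList.map fun i => G.gen (i, s)).prod)
        ∧ ∀ (w : W) (v : S → R), G.Psi (G.rep w v) = rhoL (phi w) (G.Psi v) := by
  refine ⟨fun s i j => G.gen_comm s i j, G.Psi_bijective, ?_⟩
  have hsymm : ∀ p q : ι × S, G.mcheck p q = G.mcheck q p :=
    fun p q => G.mcheck_symm rhoL hrhoL p q
  have hfaith : ∀ z : G.Wcheck, rhoL z = 1 → z = 1 := by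
    intro z hz
    exact tits_faithful (G.csW hsymm) (fun p q => G.rcheck p q) rhoL
      (fun p => G.rcheck_diag p)
      (fun p q h => G.mcheck_eq_two_iff h)
      (fun p q h => G.mcheck_eq_three_iff h)
      (fun p q h => G.mcheck_eq_zero_iff h)
      (fun p q h => G.rcheck_nonpos h)
      (fun p v => hrhoL p v) z hz
  set P : S → G.Wcheck :=
    fun s => ((Finset.univ : Finset ι).toList.map fun i => G.gen (i, s)).prod with hP
  have hequiv_simple : ∀ (s : S) (v : S → R),
      G.Psi (G.rep (G.cs.simple s) v) = rhoL (P s) (G.Psi v) :=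
    fun s v => G.Psi_rep_simple rhoL hrhoL s v
  have hpow : ∀ (s t : S) (n : ℕ) (v : S → R),
      rhoL ((P s * P t) ^ n) (G.Psi v)
        = G.Psi (G.rep ((G.cs.simple s * G.cs.simple t) ^ n) v) := by
    intro s t n
    induction n with
    | zero =>
      intro v
      rw [pow_zero, pow_zero, map_one, map_one]
      rfl
    | succ n ihn =>
      intro v
      rw [pow_succ', pow_succ', G.rhoL_mul rhoL, ihn, G.rhoL_mul rhoL,
        ← hequiv_simple, ← hequiv_simple]
      rw [show G.rep (G.cs.simple s * G.cs.simple t * (G.cs.simple s * G.cs.simple t) ^ n) v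
          = G.rep (G.cs.simple s)
              (G.rep (G.cs.simple t) (G.rep ((G.cs.simple s * G.cs.simple t) ^ n) v)) from by
        rw [map_mul, map_mul]; rfl]
  have hlift : ∀ s t : S, (P s * P t) ^ (G.M s t) = 1 := by
    intro s t
    apply hfaith
    apply LinearEquiv.ext
    intro x
    obtain ⟨v, rfl⟩ := G.Psi_bijective.2 x
    rw [hpow s t (G.M s t) v, G.cs.simple_mul_simple_pow s t, map_one]
    rfl
  set phi : W →* G.Wcheck := G.cs.lift ⟨P, hlift⟩ with hphi
  have hphis : ∀ s : S, phi (G.cs.simple s) = P s :=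
    fun s => G.cs.lift_apply_simple hlift s
  refine ⟨phi, fun s => hphis s, ?_⟩
  intro w
  induction w using G.cs.simple_induction_left with
  | one =>
    intro v
    rw [map_one, map_one]
    simp [LinearEquiv.coe_one]
  | mul_simple_left w i h =>
    intro v
    rw [show G.rep (G.cs.simple i * w) v = G.rep (G.cs.simple i) (G.rep w v) from by
      rw [map_mul]; rfl]
    rw [hequiv_simple i (G.rep w v), h v, map_mul]
    rw [show rhoL (phi (G.cs.simple i) * phi w) (G.Psi v)
        = rhoL (phi (G.cs.simple i)) (rhoL (phi w) (G.Psi v)) from G.rhoL_mul rhoL _ _ _]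
    rw [hphis i]


end
end

section
/- Let RΛ_S be a geometric R-realisation of (W,S). Then the contragredient representation of W on Hom_R(RΛ_S,ℝ), given by (w·Z)(v) := Z(w⁻¹·v), is faithful (the corresponding homomorphism from W to the group of ℝ-linear automorphisms of Hom_R(RΛ_S,ℝ) is injective), and the R-linear representation of W on RΛ_S is also faithful. In particular, every geometric R-realisation of (W,S) is faithful. -/
open scoped BigOperators

noncomputable section

variable {R : Type*} [Ring R] {ι : Type*} [Fintype ι] [DecidableEq ι]
  {S : Type*} [Fintype S] [DecidableEq S] {W : Type*} [Group W]


/-- A function `Y : RΛ_S → ℝ` is an `R`-linear functional (with `ℝ` an `R`-module via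
`FPdim`) if it is additive and `FPdim`-semilinear. -/
def GeomSetting.IsRLinearFunctional (G : GeomSetting R ι S W) (Y : (S → R) → ℝ) : Prop :=
  (∀ u v : S → R, Y (u + v) = Y u + Y v) ∧ ∀ (r : R) (v : S → R), Y (r • v) = G.FP r * Y v


section TitsAuxSec


noncomputable def titsP (lam : ℝ) : ℕ → ℝ × ℝ
  | 0 => (1, 0)
  | (j+1) => if Even j then ((titsP lam j).1, lam * (titsP lam j).1 - (titsP lam j).2)
      else (lam * (titsP lam j).2 - (titsP lam j).1, (titsP lam j).2)

lemma sin_rec (θ x : ℝ) : Real.sin (x + θ) = 2 * Real.cos θ * Real.sin x - Real.sin (x - θ) := by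
  rw [Real.sin_add, Real.sin_sub]; ring

lemma pi_div_lt (m : ℕ) (hm : 2 ≤ m) : Real.pi / m < Real.pi := by
  have hm0 : (0:ℝ) < m := by positivity
  rw [div_lt_iff₀ hm0]
  have h2 : (2:ℝ) ≤ m := by exact_mod_cast hm
  nlinarith [Real.pi_pos]

lemma sin_pi_div_pos (m : ℕ) (hm : 2 ≤ m) : 0 < Real.sin (Real.pi / m) := by
  have hm0 : (0:ℝ) < m := by positivity
  exact Real.sin_pos_of_pos_of_lt_pi (by positivity) (pi_div_lt m hm)

lemma titsP_form (m : ℕ) (hm : 2 ≤ m) (j : ℕ) :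
    titsP (2 * Real.cos (Real.pi / m)) j =
      if Even j then (Real.sin ((j+1) * (Real.pi / m)) / Real.sin (Real.pi / m),
                      Real.sin (j * (Real.pi / m)) / Real.sin (Real.pi / m))
      else (Real.sin (j * (Real.pi / m)) / Real.sin (Real.pi / m),
            Real.sin ((j+1) * (Real.pi / m)) / Real.sin (Real.pi / m)) := by
  have hsin : 0 < Real.sin (Real.pi / m) := sin_pi_div_pos m hm
  set θ := Real.pi / m with hθ
  induction j with
  | zero => simp [titsP, div_self hsin.ne']
  | succ j ih =>
    have h2 : Real.sin (((j:ℝ)+1+1) * θ) =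
        2 * Real.cos θ * Real.sin (((j:ℝ)+1) * θ) - Real.sin ((j:ℝ) * θ) := by
      have := sin_rec θ (((j:ℝ)+1) * θ)
      have e1 : ((j:ℝ)+1) * θ + θ = ((j:ℝ)+1+1) * θ := by ring
      have e2 : ((j:ℝ)+1) * θ - θ = (j:ℝ) * θ := by ring
      rw [e1, e2] at this
      exact this
    rcases Nat.even_or_odd j with hj | hj
    · have hj' : ¬ Even (j+1) := by simp [Nat.even_add_one, hj]
      rw [titsP, if_pos hj, ih, if_pos hj, if_neg hj']
      simp only [Prod.mk.injEq]
      constructor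
      · push_cast; ring
      · push_cast
        rw [h2]; field_simp
    · have hje : ¬ Even j := Nat.not_even_iff_odd.mpr hj
      have hj' : Even (j+1) := by simp [Nat.even_add_one, hje]
      rw [titsP, if_neg hje, ih, if_neg hje, if_pos hj']
      simp only [Prod.mk.injEq]
      constructor
      · push_cast
        rw [h2]; field_simp
      · push_cast; ring

lemma titsP_nonneg_fin (m : ℕ) (hm : 2 ≤ m) (j : ℕ) (hj : j + 1 ≤ m) :
    0 ≤ (titsP (2 * Real.cos (Real.pi / m)) j).1 ∧
      0 ≤ (titsP (2 * Real.cos (Real.pi / m)) j).2 := by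
  have hm0 : (0:ℝ) < m := by positivity
  have hθ0 : 0 < Real.pi / m := by positivity
  have hsin : 0 < Real.sin (Real.pi / m) := sin_pi_div_pos m hm
  have key : ∀ i : ℕ, i ≤ m → 0 ≤ Real.sin (i * (Real.pi / m)) := by
    intro i hi
    apply Real.sin_nonneg_of_nonneg_of_le_pi
    · positivity
    · calc (i:ℝ) * (Real.pi / m) ≤ (m:ℝ) * (Real.pi / m) := by
            apply mul_le_mul_of_nonneg_right _ hθ0.le
            exact_mod_cast hi
        _ = Real.pi := by field_simp
  have hs1 : 0 ≤ Real.sin (((j:ℝ)+1) * (Real.pi / m)) := by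
    have := key (j+1) hj; push_cast at this; exact this
  have hs0 : 0 ≤ Real.sin ((j:ℝ) * (Real.pi / m)) := key j (Nat.le_of_succ_le hj)
  rw [titsP_form m hm j]
  rcases Nat.even_or_odd j with hj' | hj'
  · rw [if_pos hj']
    exact ⟨div_nonneg hs1 hsin.le, div_nonneg hs0 hsin.le⟩
  · rw [if_neg (Nat.not_even_iff_odd.mpr hj')]
    exact ⟨div_nonneg hs0 hsin.le, div_nonneg hs1 hsin.le⟩

lemma titsP_nonneg_inf (lam : ℝ) (hlam : 2 ≤ lam) (j : ℕ) :
    0 ≤ (titsP lam j).1 ∧ 0 ≤ (titsP lam j).2 := by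
  suffices h : 0 ≤ (titsP lam j).1 ∧ 0 ≤ (titsP lam j).2 ∧
      (if Even j then (titsP lam j).2 ≤ (titsP lam j).1 else (titsP lam j).1 ≤ (titsP lam j).2) by
    exact ⟨h.1, h.2.1⟩
  induction j with
  | zero => simp [titsP]
  | succ j ih =>
    obtain ⟨h1, h2, h3⟩ := ih
    rcases Nat.even_or_odd j with hj | hj
    · rw [if_pos hj] at h3
      have hj' : ¬ Even (j+1) := by simp [Nat.even_add_one, hj]
      have hnew : 0 ≤ lam * (titsP lam j).1 - (titsP lam j).2 := by nlinarith
      have hord : (titsP lam j).1 ≤ lam * (titsP lam j).1 - (titsP lam j).2 := by nlinarith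
      rw [titsP, if_pos hj, if_neg hj']
      exact ⟨h1, hnew, hord⟩
    · have hje : ¬ Even j := Nat.not_even_iff_odd.mpr hj
      rw [if_neg hje] at h3
      have hj' : Even (j+1) := by simp [Nat.even_add_one, hje]
      have hnew : 0 ≤ lam * (titsP lam j).2 - (titsP lam j).1 := by nlinarith
      have hord : (titsP lam j).2 ≤ lam * (titsP lam j).2 - (titsP lam j).1 := by nlinarith
      rw [titsP, if_neg hje, if_pos hj']
      exact ⟨hnew, h2, hord⟩

set_option linter.unusedSectionVars false



variable (G : GeomSetting R ι S W)


lemma GS_star_one : G.FD.star 1 = 1 := by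
  have h1 : G.FD.b.repr (G.FD.b G.FD.unit * G.FD.b G.FD.unit) G.FD.unit = 1 := by
    rw [G.FD.b_unit, one_mul, ← G.FD.b_unit, Module.Basis.repr_self]
    simp
  have h2 : G.FD.unit = G.FD.inv G.FD.unit := (G.FD.c_unit_iff _ _).mp h1
  calc G.FD.star 1 = G.FD.star (G.FD.b G.FD.unit) := by rw [G.FD.b_unit]
    _ = G.FD.b (G.FD.inv G.FD.unit) := G.FD.star_basis _
    _ = G.FD.b G.FD.unit := by rw [← h2]
    _ = 1 := G.FD.b_unit

lemma GS_FP_nonneg {r : R} (h : G.FD.nonneg r) : 0 ≤ G.FP r := by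
  have hr : r = ∑ i, G.FD.b.repr r i • G.FD.b i := (G.FD.b.sum_repr r).symm
  rw [hr, map_sum]
  apply Finset.sum_nonneg
  intro i _
  rw [map_zsmul]
  exact zsmul_nonneg (le_trans zero_le_one (G.FP_basis i)) (h i)

lemma GS_smul_simRoot (x : R) (t : S) : x • simRoot R t = Pi.single t x := by
  funext u
  simp only [Pi.smul_apply, simRoot, smul_eq_mul]
  rcases eq_or_ne u t with rfl | h
  · simp
  · simp [Pi.single_apply, h]

lemma GS_B_apply (s : S) (v : S → R) : G.B (simRoot R s) v = ∑ t, v t * G.cartan s t := by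
  let φ' : (S → R) →+ R := AddMonoidHom.mk' (fun x => G.B (simRoot R s) x)
    (fun a b => G.B_add_right (simRoot R s) a b)
  have hv : v = ∑ t, Pi.single t (v t) := (Finset.univ_sum_single v).symm
  calc G.B (simRoot R s) v = φ' v := rfl
    _ = φ' (∑ t, Pi.single t (v t)) := by rw [← hv]
    _ = ∑ t, φ' (Pi.single t (v t)) := map_sum φ' _ _
    _ = ∑ t, v t * G.cartan s t := by
        apply Finset.sum_congr rfl
        intro t _
        show G.B (simRoot R s) (Pi.single t (v t)) = v t * G.cartan s t
        rw [← GS_smul_simRoot]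
        calc G.B (simRoot R s) (v t • simRoot R t)
            = G.B ((1:R) • simRoot R s) (v t • simRoot R t) := by rw [one_smul]
          _ = v t * G.B (simRoot R s) (simRoot R t) * G.FD.star 1 := G.B_sesq 1 (v t) s t
          _ = v t * G.cartan s t := by rw [GS_star_one, mul_one]; rfl

lemma GS_k_symm {s t : S} (hst : s ≠ t) : G.FP (G.cartan t s) = G.FP (G.cartan s t) := by
  rw [GeomSetting.cartan, GeomSetting.cartan, G.cartan_star s t hst, G.FP_star]

lemma GS_f_rep_simple (s : S) (v : S → R) (u : S) :
    G.FP (G.rep (G.cs.simple s) v u) =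
      G.FP (v u) - (if u = s then ∑ t, G.FP (v t) * G.FP (G.cartan s t) else 0) := by
  rw [G.rep_simple s v]
  have : (v - G.B (simRoot R s) v • simRoot R s) u
      = v u - G.B (simRoot R s) v * (simRoot R s u) := by
    simp [Pi.sub_apply, Pi.smul_apply, smul_eq_mul]
  rw [this, map_sub, map_mul]
  congr 1
  rcases eq_or_ne u s with rfl | h
  · have h1 : simRoot R u u = 1 := by simp [simRoot]
    rw [h1, map_one, mul_one, if_pos rfl, GS_B_apply, map_sum]
    exact Finset.sum_congr rfl fun t _ => map_mul G.FP _ _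
  · have h1 : simRoot R s u = 0 := by simp [simRoot, Pi.single_apply, h]
    rw [h1, map_zero, mul_zero, if_neg h]

lemma GS_comb (w : W) (v : S → R) (u : S) :
    G.FP (G.rep w v u) = ∑ t, G.FP (v t) * G.FP (G.rep w (simRoot R t) u) := by
  have hv : v = ∑ t, v t • simRoot R t := by
    conv_lhs => rw [← Finset.univ_sum_single v]
    exact Finset.sum_congr rfl fun t _ => (GS_smul_simRoot _ _).symm
  conv_lhs => rw [hv]
  rw [map_sum, Finset.sum_apply, map_sum]
  apply Finset.sum_congr rfl
  intro t _
  rw [map_smul, Pi.smul_apply, smul_eq_mul, map_mul]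



lemma titsP_succ (lam : ℝ) (j : ℕ) : titsP lam (j+1) =
    if Even j then ((titsP lam j).1, lam * (titsP lam j).1 - (titsP lam j).2)
    else (lam * (titsP lam j).2 - (titsP lam j).1, (titsP lam j).2) := rfl

lemma GS_FP_two : G.FP (2 : R) = 2 := by
  have : (2:R) = 1 + 1 := by norm_num
  rw [this, map_add, map_one]; norm_num

lemma GS_dih (s t : S) (hst : s ≠ t) (j : ℕ) :
    (∀ u, u ≠ s → u ≠ t →
      G.FP (G.rep (G.cs.wordProd (CoxeterSystem.alternatingWord s t j)) (simRoot R s) u) = 0)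
    ∧ G.FP (G.rep (G.cs.wordProd (CoxeterSystem.alternatingWord s t j)) (simRoot R s) s)
        = (titsP (-(G.FP (G.cartan s t))) j).1
    ∧ G.FP (G.rep (G.cs.wordProd (CoxeterSystem.alternatingWord s t j)) (simRoot R s) t)
        = (titsP (-(G.FP (G.cartan s t))) j).2 := by
  set lam := -(G.FP (G.cartan s t)) with hlam
  have hts : G.FP (G.cartan t s) = -lam := by rw [GS_k_symm G hst, hlam]; ring
  have hstv : G.FP (G.cartan s t) = -lam := by rw [hlam]; ring
  have hss : G.FP (G.cartan s s) = 2 := by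
    show G.FP (G.B (simRoot R s) (simRoot R s)) = 2
    rw [G.cartan_diag s]; exact GS_FP_two G
  have htt : G.FP (G.cartan t t) = 2 := by
    show G.FP (G.B (simRoot R t) (simRoot R t)) = 2
    rw [G.cartan_diag t]; exact GS_FP_two G
  induction j with
  | zero =>
    have h0 : CoxeterSystem.alternatingWord s t 0 = ([] : List S) := rfl
    rw [h0, G.cs.wordProd_nil, map_one]
    refine ⟨fun u hu1 hu2 => ?_, ?_, ?_⟩
    · show G.FP (simRoot R s u) = 0
      simp [simRoot, Pi.single_apply, hu1]
    · show G.FP (simRoot R s s) = (titsP lam 0).1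
      simp [simRoot, titsP]
    · show G.FP (simRoot R s t) = (titsP lam 0).2
      simp [simRoot, Pi.single_apply, Ne.symm hst, titsP]
  | succ j ih =>
    obtain ⟨h0, h1, h2⟩ := ih
    set vj : S → R := G.rep (G.cs.wordProd (CoxeterSystem.alternatingWord s t j)) (simRoot R s)
      with hvj
    set c : S := if Even j then t else s with hc
    have hw : CoxeterSystem.alternatingWord s t (j+1)
        = c :: CoxeterSystem.alternatingWord s t j :=
      CoxeterSystem.alternatingWord_succ' s t j
    have hsum : ∑ t', G.FP (vj t') * G.FP (G.cartan c t')
        = G.FP (vj s) * G.FP (G.cartan c s) + G.FP (vj t) * G.FP (G.cartan c t) := by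
      have hp := Finset.sum_pair (f := fun x => G.FP (vj x) * G.FP (G.cartan c x)) hst
      rw [← hp]
      apply (Finset.sum_subset (Finset.subset_univ {s,t}) ?_).symm
      intro x _ hx
      simp only [Finset.mem_insert, Finset.mem_singleton, not_or] at hx
      rw [h0 x hx.1 hx.2, zero_mul]
    have hval : ∀ u, G.FP (G.rep (G.cs.wordProd (CoxeterSystem.alternatingWord s t (j+1)))
          (simRoot R s) u)
        = G.FP (vj u) - (if u = c then
            (G.FP (vj s) * G.FP (G.cartan c s) + G.FP (vj t) * G.FP (G.cartan c t)) else 0) := by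
      intro u
      rw [hw, G.cs.wordProd_cons, map_mul]
      have happ : (G.rep (G.cs.simple c) * G.rep (G.cs.wordProd (CoxeterSystem.alternatingWord s t j)))
          (simRoot R s) = G.rep (G.cs.simple c) (vj) := rfl
      rw [happ, GS_f_rep_simple, hsum]
    refine ⟨fun u hu1 hu2 => ?_, ?_, ?_⟩
    · have huc : u ≠ c := by
        rcases Nat.even_or_odd j with hj | hj
        · rw [hc, if_pos hj]; exact hu2
        · rw [hc, if_neg (Nat.not_even_iff_odd.mpr hj)]; exact hu1
      rw [hval u, if_neg huc, h0 u hu1 hu2, sub_zero]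
    · rw [hval s, h1, titsP_succ]
      rcases Nat.even_or_odd j with hj | hj
      · have hcs : s ≠ c := by rw [hc, if_pos hj]; exact hst
        rw [if_neg hcs, if_pos hj, sub_zero]
      · have hje : ¬ Even j := Nat.not_even_iff_odd.mpr hj
        have hcs : s = c := by rw [hc, if_neg hje]
        rw [if_pos hcs, if_neg hje]
        have : G.cartan c s = G.cartan s s := by rw [← hcs]
        rw [this]
        have : G.cartan c t = G.cartan s t := by rw [← hcs]
        rw [this, hss, hstv, h2]
        show _ = lam * (titsP lam j).2 - (titsP lam j).1
        ring
    · rw [hval t, h2, titsP_succ]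
      rcases Nat.even_or_odd j with hj | hj
      · have hct : t = c := by rw [hc, if_pos hj]
        rw [if_pos hct, if_pos hj]
        have e1 : G.cartan c s = G.cartan t s := by rw [← hct]
        have e2 : G.cartan c t = G.cartan t t := by rw [← hct]
        rw [e1, e2, htt, hts, h1]
        show _ = lam * (titsP lam j).1 - (titsP lam j).2
        ring
      · have hje : ¬ Even j := Nat.not_even_iff_odd.mpr hj
        have hct : t ≠ c := by rw [hc, if_neg hje]; exact Ne.symm hst
        rw [if_neg hct, if_neg hje, sub_zero]


lemma GS_pos : ∀ n : ℕ, ∀ w : W, G.cs.length w = n → ∀ s : S, ¬ G.cs.IsRightDescent w s →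
    ∀ u : S, 0 ≤ G.FP (G.rep w (simRoot R s) u) := by
  intro n
  induction n using Nat.strong_induction_on with
  | _ n ih =>
    intro w hw s hs u
    rcases eq_or_ne w 1 with rfl | hw1
    · rw [map_one]
      show 0 ≤ G.FP (simRoot R s u)
      rcases eq_or_ne u s with rfl | h
      · simp [simRoot]
      · simp [simRoot, Pi.single_apply, h]
    · obtain ⟨t, ht⟩ := G.cs.exists_rightDescent_of_ne_one hw1
      have hts : t ≠ s := by rintro rfl; exact hs ht
      have hst : s ≠ t := Ne.symm hts
      classical
      set A : ℕ → Prop := fun j => ∃ x y : S, ((x = s ∧ y = t) ∨ (x = t ∧ y = s)) ∧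
        G.cs.length (w * (G.cs.wordProd (CoxeterSystem.alternatingWord x y j))⁻¹) + j
          = G.cs.length w with hA
      have hA_le : ∀ j, A j → j ≤ G.cs.length w := by
        rintro j ⟨x, y, _, hxy⟩; omega
      have hA1 : A 1 := by
        refine ⟨s, t, Or.inl ⟨rfl, rfl⟩, ?_⟩
        rw [show CoxeterSystem.alternatingWord s t 1 = [t] from rfl,
          G.cs.wordProd_singleton, G.cs.inv_simple]
        exact G.cs.isRightDescent_iff.mp ht
      have hlw1 : 1 ≤ G.cs.length w := by
        rcases Nat.eq_zero_or_pos (G.cs.length w) with h0 | h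
        · exact absurd (G.cs.length_eq_zero_iff.mp h0) hw1
        · exact h
      set k := Nat.findGreatest A (G.cs.length w) with hk
      have hAk : A k := Nat.findGreatest_spec hlw1 hA1
      have hk1 : 1 ≤ k := Nat.le_findGreatest hlw1 hA1
      have hmax : ∀ j, A j → j ≤ k := by
        intro j hj
        by_contra hlt
        push_neg at hlt
        exact (Nat.findGreatest_is_greatest hlt (hA_le j hj)) hj
      obtain ⟨x, y, hxy, hlen⟩ := hAk
      obtain ⟨k', hk'⟩ : ∃ k', k = k' + 1 := ⟨k - 1, by omega⟩
      have hnds : G.cs.length (w * G.cs.simple s) = G.cs.length w + 1 :=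
        G.cs.not_isRightDescent_iff.mp hs
      -- the last letter of the alternating word must be t
      have hyt : x = s ∧ y = t := by
        rcases hxy with h | ⟨hxt, hys⟩
        · exact h
        · exfalso
          rw [hxt, hys] at hlen
          have hω : CoxeterSystem.alternatingWord t s k
              = (CoxeterSystem.alternatingWord s t k').concat s := by
            rw [hk']; rfl
          have hcan : w * G.cs.simple s
              = (w * (G.cs.wordProd (CoxeterSystem.alternatingWord t s k))⁻¹)
                * G.cs.wordProd (CoxeterSystem.alternatingWord s t k') := by
            rw [hω, G.cs.wordProd_concat, mul_inv_rev, G.cs.inv_simple]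
            group
          have hb1 := G.cs.length_mul_le
            (w * (G.cs.wordProd (CoxeterSystem.alternatingWord t s k))⁻¹)
            (G.cs.wordProd (CoxeterSystem.alternatingWord s t k'))
          have hb2 := G.cs.length_wordProd_le (CoxeterSystem.alternatingWord s t k')
          rw [CoxeterSystem.length_alternatingWord] at hb2
          rw [← hcan] at hb1
          omega
      rw [hyt.1, hyt.2] at hlen
      -- w', the prefix
      have hnd : ∀ c : S, c = s ∨ c = t →
          ¬ G.cs.IsRightDescent (w * (G.cs.wordProd (CoxeterSystem.alternatingWord s t k))⁻¹) c := by
        intro c hc hdesc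
        have hdl := G.cs.isRightDescent_iff.mp hdesc
        by_cases hcc : c = (if Even k then t else s)
        · -- prepend
          have hA' : A (k+1) := by
            refine ⟨s, t, Or.inl ⟨rfl, rfl⟩, ?_⟩
            have hw2 : CoxeterSystem.alternatingWord s t (k+1)
                = c :: CoxeterSystem.alternatingWord s t k := by
              rw [CoxeterSystem.alternatingWord_succ', ← hcc]
            rw [hw2, G.cs.wordProd_cons, mul_inv_rev, G.cs.inv_simple, ← mul_assoc]
            omega
          have := hmax (k+1) hA'
          omega
        · -- cancellation with the first letter
          have hfl : CoxeterSystem.alternatingWord s t k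
              = c :: CoxeterSystem.alternatingWord s t k' := by
            rw [hk', CoxeterSystem.alternatingWord_succ']
            congr 1
            rcases Nat.even_or_odd k' with he | ho
            · have hne : ¬ Even (k'+1) := by simp [Nat.even_add_one, he]
              rw [if_pos he]
              rw [hk', if_neg hne] at hcc
              rcases hc with rfl | rfl
              · exact absurd rfl hcc
              · rfl
            · have he1 : Even (k'+1) := by
                simp [Nat.even_add_one, Nat.not_even_iff_odd.mpr ho]
              rw [if_neg (Nat.not_even_iff_odd.mpr ho)]
              rw [hk', if_pos he1] at hcc
              rcases hc with rfl | rfl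
              · rfl
              · exact absurd rfl hcc
          have hfact : w = ((w * (G.cs.wordProd (CoxeterSystem.alternatingWord s t k))⁻¹)
              * G.cs.simple c) * G.cs.wordProd (CoxeterSystem.alternatingWord s t k') := by
            rw [hfl, G.cs.wordProd_cons, mul_inv_rev]
            group
          have hb1 := G.cs.length_mul_le
            ((w * (G.cs.wordProd (CoxeterSystem.alternatingWord s t k))⁻¹) * G.cs.simple c)
            (G.cs.wordProd (CoxeterSystem.alternatingWord s t k'))
          have hb2 := G.cs.length_wordProd_le (CoxeterSystem.alternatingWord s t k')
          rw [CoxeterSystem.length_alternatingWord] at hb2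
          rw [← hfact] at hb1
          omega
      have hnds' := hnd s (Or.inl rfl)
      have hndt' := hnd t (Or.inr rfl)
      have hlw' : G.cs.length (w * (G.cs.wordProd (CoxeterSystem.alternatingWord s t k))⁻¹) < n := by
        omega
      have ihs := ih _ hlw' _ rfl s hnds'
      have iht := ih _ hlw' _ rfl t hndt'
      -- reducedness of the alternating word of length k+1
      have hconcat : CoxeterSystem.alternatingWord t s (k+1)
          = (CoxeterSystem.alternatingWord s t k).concat s := rfl
      have hwfact : w * G.cs.simple s
          = (w * (G.cs.wordProd (CoxeterSystem.alternatingWord s t k))⁻¹)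
            * G.cs.wordProd (CoxeterSystem.alternatingWord t s (k+1)) := by
        rw [hconcat, G.cs.wordProd_concat]
        group
      have hred : G.cs.length (G.cs.wordProd (CoxeterSystem.alternatingWord t s (k+1))) = k+1 := by
        have hb1 := G.cs.length_wordProd_le (CoxeterSystem.alternatingWord t s (k+1))
        rw [CoxeterSystem.length_alternatingWord] at hb1
        have hb2 := G.cs.length_mul_le
          (w * (G.cs.wordProd (CoxeterSystem.alternatingWord s t k))⁻¹)
          (G.cs.wordProd (CoxeterSystem.alternatingWord t s (k+1)))
        rw [← hwfact] at hb2
        omega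
      -- positivity of the dihedral coefficients
      obtain ⟨hd0, hd1, hd2⟩ := GS_dih G s t hst k
      have hnn : 0 ≤ (titsP (-(G.FP (G.cartan s t))) k).1
          ∧ 0 ≤ (titsP (-(G.FP (G.cartan s t))) k).2 := by
        rcases eq_or_ne (G.M s t) 0 with hM0 | hM0
        · apply titsP_nonneg_inf
          have h2' := G.cartan_inf s t hst hM0
          have hcc : G.cartan s t = G.B (simRoot R s) (simRoot R t) := rfl
          rw [← hcc] at h2'
          linarith
        · have hMts : G.M t s ≠ 0 := by rw [G.M.symmetric t s]; exact hM0
          have hkM : k + 1 ≤ G.M t s := by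
            by_contra h'
            push_neg at h'
            refine G.cs.not_isReduced_alternatingWord t s hMts h' ?_
            show G.cs.length _ = _
            rw [CoxeterSystem.length_alternatingWord]
            exact hred
          have hm2 : 2 ≤ G.M s t := by rw [G.M.symmetric s t]; omega
          have hfin := G.cartan_fin s t hst hM0
          have hcc : G.cartan s t = G.B (simRoot R s) (simRoot R t) := rfl
          rw [← hcc] at hfin
          have : -(G.FP (G.cartan s t)) = 2 * Real.cos (Real.pi / (G.M s t : ℝ)) := by
            rw [hfin]; ring
          rw [this]
          exact titsP_nonneg_fin (G.M s t) hm2 k (by rw [G.M.symmetric s t]; omega)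
      -- assemble
      have hcomb : G.FP (G.rep w (simRoot R s) u)
          = ∑ t', G.FP (G.rep (G.cs.wordProd (CoxeterSystem.alternatingWord s t k)) (simRoot R s) t')
              * G.FP (G.rep (w * (G.cs.wordProd (CoxeterSystem.alternatingWord s t k))⁻¹)
                  (simRoot R t') u) := by
        have hw0 : w = (w * (G.cs.wordProd (CoxeterSystem.alternatingWord s t k))⁻¹)
            * G.cs.wordProd (CoxeterSystem.alternatingWord s t k) := by group
        conv_lhs => rw [hw0]
        rw [map_mul]
        exact GS_comb G _ _ u
      rw [hcomb]
      apply Finset.sum_nonneg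
      intro t' _
      rcases eq_or_ne t' s with rfl | h1
      · rw [hd1]; exact mul_nonneg hnn.1 (ihs u)
      · rcases eq_or_ne t' t with rfl | h2
        · rw [hd2]; exact mul_nonneg hnn.2 (iht u)
        · rw [hd0 t' h1 h2, zero_mul]


lemma GS_fixed_eq_one (w : W) (h : ∀ (v : S → R) (u : S), G.FP (G.rep w v u) = G.FP (v u)) :
    w = 1 := by
  by_contra hw
  obtain ⟨s, hdesc⟩ := G.cs.exists_rightDescent_of_ne_one hw
  have hnd : ¬ G.cs.IsRightDescent (w * G.cs.simple s) s :=
    G.cs.isRightDescent_iff_not_isRightDescent_mul.mp hdesc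
  have hpos := GS_pos G (G.cs.length (w * G.cs.simple s)) (w * G.cs.simple s) rfl s hnd
  have hrs : G.rep (G.cs.simple s) (simRoot R s) = - simRoot R s := by
    rw [G.rep_simple]
    have h2 : G.B (simRoot R s) (simRoot R s) = 2 := G.cartan_diag s
    rw [h2]
    funext u'
    simp only [Pi.sub_apply, Pi.smul_apply, smul_eq_mul, Pi.neg_apply]
    rw [two_mul]
    abel
  have key : ∀ u, G.FP (G.rep w (simRoot R s) u)
      = - G.FP (G.rep (w * G.cs.simple s) (simRoot R s) u) := by
    intro u
    have hw2 : w = (w * G.cs.simple s) * G.cs.simple s := by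
      rw [mul_assoc, G.cs.simple_mul_simple_self, mul_one]
    conv_lhs => rw [hw2]
    rw [map_mul]
    show G.FP ((G.rep (w * G.cs.simple s)) (G.rep (G.cs.simple s) (simRoot R s)) u) = _
    rw [hrs, map_neg]
    simp only [Pi.neg_apply, map_neg]
  have h1 := h (simRoot R s) s
  have h2 : G.FP (simRoot R s s) = 1 := by simp [simRoot]
  rw [key s, h2] at h1
  have h3 := hpos s
  linarith


end TitsAuxSec

/-- **Corollary 4.5.** The contragredient representation of `W` on `Hom_R(RΛ_S, ℝ)` is
faithful, and the `R`-linear representation of `W` on `RΛ_S` is faithful; in particular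
every geometric `R`-realisation is faithful. -/
theorem geometric_realisation_faithful (G : GeomSetting R ι S W) :
    Function.Injective (fun w : W =>
      fun Z : {Y : (S → R) → ℝ // G.IsRLinearFunctional Y} =>
        fun v : S → R => Z.1 (G.rep w⁻¹ v))
    ∧ Function.Injective G.rep := by
  have repmul : ∀ (a b : W) (v : S → R), G.rep (a * b) v = G.rep a (G.rep b v) := by
    intro a b v
    rw [map_mul]
    rfl
  constructor
  · intro w₁ w₂ h
    have hfun : ∀ u : S, G.IsRLinearFunctional (fun v => G.FP (v u)) := by
      intro u
      constructor
      · intro a b; simp only [Pi.add_apply, map_add]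
      · intro r v; simp only [Pi.smul_apply, smul_eq_mul, map_mul]
    have h' : ∀ (u : S) (v : S → R), G.FP (G.rep w₁⁻¹ v u) = G.FP (G.rep w₂⁻¹ v u) := by
      intro u v
      exact congrFun (congrFun h ⟨fun v => G.FP (v u), hfun u⟩) v
    have hww : ∀ (v : S → R) (u : S), G.FP (G.rep (w₂⁻¹ * w₁) v u) = G.FP (v u) := by
      intro v u
      have h1 := h' u (G.rep w₁ v)
      have e1 : G.rep w₁⁻¹ (G.rep w₁ v) = v := by
        rw [← repmul, inv_mul_cancel, map_one]
        rfl
      have e2 : G.rep w₂⁻¹ (G.rep w₁ v) = G.rep (w₂⁻¹ * w₁) v := (repmul _ _ _).symm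
      rw [e1, e2] at h1
      exact h1.symm
    exact (inv_mul_eq_one.mp (GS_fixed_eq_one G _ hww)).symm
  · intro w₁ w₂ h
    have hww : ∀ (v : S → R) (u : S), G.FP (G.rep (w₂⁻¹ * w₁) v u) = G.FP (v u) := by
      intro v u
      have e : G.rep (w₂⁻¹ * w₁) v = v := by
        rw [repmul, h, ← repmul, inv_mul_cancel, map_one]
        rfl
      rw [e]
    exact (inv_mul_eq_one.mp (GS_fixed_eq_one G _ hww)).symm


end
end

section
/- For every w ∈ W and every Z ∈ Hom_R(RΛ_S,ℝ), viewing Z as an element of Hom_ℤ(RΛ_S,ℝ), one has φ(w)·Z = w·Z. In particular the subspace Hom_R(RΛ_S,ℝ) ⊆ Hom_ℤ(RΛ_S,ℝ) is invariant under φ(W) ⊆ W̌, and the inclusion Hom_R(RΛ_S,ℝ) ⊆ Hom_ℤ(RΛ_S,ℝ) is W-equivariant with respect to the unfolding homomorphism φ. -/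
open scoped BigOperators

noncomputable section

section Hyperplanes

variable {X : Type*} {G : Type*} [Group G]

/-- The closed fundamental cone in coordinates. -/
def coneC (X : Type*) : Set (X → ℝ) := {Z | ∀ x, 0 ≤ Z x}

/-- The open fundamental cone in coordinates. -/
def coneCo (X : Type*) : Set (X → ℝ) := {Z | ∀ x, 0 < Z x}

/-- The coordinate hyperplane (wall) at `x`. -/
def wallH (X : Type*) (x : X) : Set (X → ℝ) := {Z | Z x = 0}

/-- The Tits cone of an action given in coordinates on the dual space. -/
def titsT (rho : G →* ((X → ℝ) ≃ₗ[ℝ] (X → ℝ))) : Set (X → ℝ) :=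
  ⋃ g : G, rho g '' coneC X

/-- The hyperplane system of an action. -/
def hypSys (rho : G →* ((X → ℝ) ≃ₗ[ℝ] (X → ℝ))) : Set (Set (X → ℝ)) :=
  {H | ∃ (g : G) (x : X), H = rho g '' wallH X x}

/-- The complexified hyperplane complement. -/
def omegaReg (rho : G →* ((X → ℝ) ≃ₗ[ℝ] (X → ℝ))) : Set ((X → ℝ) × (X → ℝ)) :=
  (interior (titsT rho) ×ˢ interior (titsT rho)) \ ⋃ H ∈ hypSys rho, H ×ˢ H

end Hyperplanes

/-- The embedding `Hom_R(RΛ_S, ℝ) → Hom_ℤ(RΛ_S, ℝ)` in coordinates: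
`Z(α_s) ↦ (Z(b_i · α_s))_{(i,s)} = (FPdim(b_i) · Z(α_s))_{(i,s)}`. -/
def GeomSetting.emb {R : Type*} [Ring R] {ι : Type*} [Fintype ι] [DecidableEq ι]
    {S : Type*} [Fintype S] [DecidableEq S] {W : Type*} [Group W]
    (G : GeomSetting R ι S W) (Z : S → ℝ) : (ι × S) → ℝ :=
  fun p => G.FP (G.FD.b p.1) * Z p.2

variable {R : Type*} [Ring R] {ι : Type*} [Fintype ι] [DecidableEq ι]
  {S : Type*} [Fintype S] [DecidableEq S] {W : Type*} [Group W]



section Aux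

variable {R : Type*} [Ring R] {ι : Type*} [Fintype ι] [DecidableEq ι]
  {S : Type*} [Fintype S] [DecidableEq S] {W : Type*} [Group W]

lemma rcheck_same_col (G : GeomSetting R ι S W) (i j : ι) (s : S) :
    G.rcheck (i, s) (j, s) = if i = j then 2 else 0 := by
  simp [GeomSetting.rcheck]

lemma prod_gen_apply (G : GeomSetting R ι S W)
    (rhoF : G.Wcheck →* (((ι × S) → ℝ) ≃ₗ[ℝ] ((ι × S) → ℝ)))
    (hrhoF : ∀ (p : ι × S) (Z : (ι × S) → ℝ) (q : ι × S),
      rhoF (G.gen p) Z q = Z q - (G.rcheck p q : ℝ) * Z p)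
    (s : S) (L : List ι) (hL : L.Nodup) (Y : (ι × S) → ℝ) (q : ι × S) :
    rhoF ((L.map fun i => G.gen (i, s)).prod) Y q
      = Y q - (L.map fun i => (G.rcheck (i, s) q : ℝ) * Y (i, s)).sum := by
  induction L generalizing q with
  | nil => simp
  | cons a L ih =>
    have haL : a ∉ L := (List.nodup_cons.mp hL).1
    have hLnd : L.Nodup := (List.nodup_cons.mp hL).2
    have hmul : rhoF (((a :: L).map fun i => G.gen (i, s)).prod) Y
        = rhoF (G.gen (a, s)) (rhoF ((L.map fun i => G.gen (i, s)).prod) Y) := by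
      rw [List.map_cons, List.prod_cons, map_mul]
      rfl
    rw [hmul, hrhoF]
    have hfix : rhoF ((L.map fun i => G.gen (i, s)).prod) Y (a, s) = Y (a, s) := by
      rw [ih hLnd (a, s)]
      have : (L.map fun i => (G.rcheck (i, s) (a, s) : ℝ) * Y (i, s)).sum = 0 := by
        apply List.sum_eq_zero
        intro x hx
        rcases List.mem_map.mp hx with ⟨i, hi, rfl⟩
        have : i ≠ a := fun h => haL (h ▸ hi)
        rw [rcheck_same_col, if_neg this]
        simp
      rw [this, sub_zero]
    rw [ih hLnd q, hfix, List.map_cons, List.sum_cons]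
    ring

lemma FP_eq_sum (G : GeomSetting R ι S W) (x : R) :
    G.FP x = ∑ i, (G.FD.b.repr x i : ℝ) * G.FP (G.FD.b i) := by
  conv_lhs => rw [← G.FD.b.sum_repr x]
  rw [map_sum]
  refine Finset.sum_congr rfl fun i _ => ?_
  rw [map_zsmul, zsmul_eq_mul]

lemma emb_simple (G : GeomSetting R ι S W)
    (rhoE : W →* ((S → ℝ) ≃ₗ[ℝ] (S → ℝ)))
    (hrhoE : ∀ (s : S) (Z : S → ℝ) (t : S),
      rhoE (G.cs.simple s) Z t = Z t - G.FP (G.cartan s t) * Z s)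
    (rhoF : G.Wcheck →* (((ι × S) → ℝ) ≃ₗ[ℝ] ((ι × S) → ℝ)))
    (hrhoF : ∀ (p : ι × S) (Z : (ι × S) → ℝ) (q : ι × S),
      rhoF (G.gen p) Z q = Z q - (G.rcheck p q : ℝ) * Z p)
    (phi : W →* G.Wcheck)
    (hphi : ∀ s : S, phi (G.cs.simple s)
      = ((Finset.univ : Finset ι).toList.map fun i => G.gen (i, s)).prod)
    (s : S) (Z : S → ℝ) :
    rhoF (phi (G.cs.simple s)) (G.emb Z) = G.emb (rhoE (G.cs.simple s) Z) := by
  funext q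
  rw [hphi s, prod_gen_apply G rhoF hrhoF s _ (Finset.nodup_toList _)]
  have hsum : ((Finset.univ : Finset ι).toList.map
      fun i => (G.rcheck (i, s) q : ℝ) * G.emb Z (i, s)).sum
      = ∑ i, (G.rcheck (i, s) q : ℝ) * G.emb Z (i, s) :=
    Finset.sum_map_toList _ _
  rw [hsum]
  obtain ⟨j, t⟩ := q
  show G.emb Z (j, t) - _ = G.FP (G.FD.b j) * (rhoE (G.cs.simple s) Z t)
  rw [hrhoE]
  by_cases hts : t = s
  · subst hts
    have h1 : ∑ i, (G.rcheck (i, t) (j, t) : ℝ) * G.emb Z (i, t)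
        = 2 * G.emb Z (j, t) := by
      rw [Finset.sum_eq_single j]
      · rw [rcheck_same_col, if_pos rfl]; norm_num
      · intro i _ hij
        rw [rcheck_same_col, if_neg hij]; simp
      · simp
    have h2 : G.FP (G.cartan t t) = 2 := by
      have : G.cartan t t = 2 := G.cartan_diag t
      rw [this, map_ofNat]
    rw [h1, h2]
    simp [GeomSetting.emb]
    ring
  · have h1 : ∀ i, G.rcheck (i, s) (j, t)
        = G.FD.b.repr (G.FD.b j * G.cartan s t) i := by
      intro i
      have hst : ¬ (s = t) := fun h => hts h.symm
      simp [GeomSetting.rcheck, hst]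
    have h2 : ∑ i, (G.rcheck (i, s) (j, t) : ℝ) * G.emb Z (i, s)
        = G.FP (G.FD.b j) * G.FP (G.cartan s t) * Z s := by
      rw [← map_mul, FP_eq_sum G (G.FD.b j * G.cartan s t), Finset.sum_mul]
      refine Finset.sum_congr rfl fun i _ => ?_
      rw [h1 i]
      simp [GeomSetting.emb]
      ring
    rw [h2]
    simp [GeomSetting.emb]
    ring

end Aux

/-- **Proposition 4.7 (dual unfolded identification).** The inclusion
`Hom_R(RΛ_S, ℝ) ⊆ Hom_ℤ(RΛ_S, ℝ)` is `W`-equivariant with respect to the unfolding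
homomorphism `φ`: for all `w ∈ W` and `Z ∈ Hom_R(RΛ_S, ℝ)`, `φ(w) · Z = w · Z`; in
particular the subspace `Hom_R(RΛ_S, ℝ)` is invariant under `φ(W)`. -/
theorem dual_inclusion_equivariant (G : GeomSetting R ι S W)
    (rhoE : W →* ((S → ℝ) ≃ₗ[ℝ] (S → ℝ)))
    (hrhoE : ∀ (s : S) (Z : S → ℝ) (t : S),
      rhoE (G.cs.simple s) Z t = Z t - G.FP (G.cartan s t) * Z s)
    (rhoF : G.Wcheck →* (((ι × S) → ℝ) ≃ₗ[ℝ] ((ι × S) → ℝ)))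
    (hrhoF : ∀ (p : ι × S) (Z : (ι × S) → ℝ) (q : ι × S),
      rhoF (G.gen p) Z q = Z q - (G.rcheck p q : ℝ) * Z p)
    (phi : W →* G.Wcheck)
    (hphi : ∀ s : S, phi (G.cs.simple s)
      = ((Finset.univ : Finset ι).toList.map fun i => G.gen (i, s)).prod) :
    (∀ (w : W) (Z : S → ℝ), rhoF (phi w) (G.emb Z) = G.emb (rhoE w Z))
    ∧ ∀ (w : W) (Y : (ι × S) → ℝ),
        Y ∈ Set.range G.emb → rhoF (phi w) Y ∈ Set.range G.emb := by
  have main : ∀ (w : W) (Z : S → ℝ), rhoF (phi w) (G.emb Z) = G.emb (rhoE w Z) := by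
    intro w
    induction w using G.cs.simple_induction with
    | simple s => exact emb_simple G rhoE hrhoE rhoF hrhoF phi hphi s
    | one => intro Z; simp
    | mul w w' hw hw' =>
      intro Z
      rw [map_mul, map_mul, map_mul]
      calc (rhoF (phi w) * rhoF (phi w')) (G.emb Z)
          = rhoF (phi w) (rhoF (phi w') (G.emb Z)) := rfl
        _ = rhoF (phi w) (G.emb (rhoE w' Z)) := by rw [hw']
        _ = G.emb (rhoE w (rhoE w' Z)) := hw _
        _ = G.emb ((rhoE w * rhoE w') Z) := rfl
  exact ⟨main, fun w Y ⟨Z, hZ⟩ => ⟨rhoE w Z, by rw [← hZ, main]⟩⟩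


end
end

section
/- Let V be a finite-dimensional real vector space, G a group acting on V by linear automorphisms, and C ⊆ V a closed convex cone with nonempty interior C°. Set T := ∪_{g∈G} g·C and let T° be the topological interior of T. Let A be a set of linear hyperplanes of V. Assume: (i) T° is convex; (ii) A is locally finite in T°, i.e. every x ∈ T° has an open neighbourhood meeting only finitely many members of A; and (iii) T° ∖ ∪_{H∈A} H ⊆ ∪_{g∈G} g·C°. Then T° equals the convex hull of ∪_{g∈G} g·C°. -/
private lemma dense_ne_level_aux {V : Type*} [NormedAddCommGroup V] [NormedSpace ℝ V]
    (f : V →ₗ[ℝ] ℝ) (hf : f ≠ 0) (c : ℝ) : Dense {v : V | f v ≠ c} := by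
  obtain ⟨w, hw⟩ : ∃ w, f w ≠ 0 := by
    by_contra h
    push_neg at h
    exact hf (LinearMap.ext fun x => h x)
  rw [Metric.dense_iff]
  intro x r hr
  by_cases hx : f x = c
  · refine ⟨x + (r / (2 * (‖w‖ + 1))) • w, ?_, ?_⟩
    · have hpos : 0 < r / (2 * (‖w‖ + 1)) := by positivity
      rw [Metric.mem_ball, dist_eq_norm]
      have : ‖x + (r / (2 * (‖w‖ + 1))) • w - x‖ = (r / (2 * (‖w‖ + 1))) * ‖w‖ := by
        rw [add_sub_cancel_left, norm_smul, Real.norm_eq_abs, abs_of_pos hpos]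
      rw [this]
      have h1 : ‖w‖ < ‖w‖ + 1 := by linarith
      calc (r / (2 * (‖w‖ + 1))) * ‖w‖ ≤ (r / (2 * (‖w‖ + 1))) * (‖w‖ + 1) := by
            apply mul_le_mul_of_nonneg_left (le_of_lt h1) (le_of_lt hpos)
        _ = r / 2 := by field_simp
        _ < r := by linarith
    · simp only [Set.mem_setOf_eq, map_add, map_smul, hx, smul_eq_mul]
      intro habs
      have : (r / (2 * (‖w‖ + 1))) * f w = 0 := by linarith
      have hpos : 0 < r / (2 * (‖w‖ + 1)) := by positivity
      rcases mul_eq_zero.1 this with h | h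
      · exact absurd h (ne_of_gt hpos)
      · exact hw h
  · exact ⟨x, Metric.mem_ball_self hr, hx⟩

/-- **Lemma 4.13 (Tits cone as a convex hull).** Let `V` be a finite-dimensional real
vector space, `G` a group acting linearly on `V`, and `C` a closed convex cone with
nonempty interior. Set `T := ⋃_g g·C`. If the interior `T°` of `T` is convex, the set `A`
of linear hyperplanes is locally finite in `T°`, and `T° ∖ ⋃_{H ∈ A} H ⊆ ⋃_g g·C°`, then
`T°` is the convex hull of `⋃_g g·C°`. -/
theorem titsCone_eq_convexHull_of_orbit_interior
    {V : Type*} [NormedAddCommGroup V] [NormedSpace ℝ V] [FiniteDimensional ℝ V]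
    {G : Type*} [Group G] (ρ : G →* (V ≃ₗ[ℝ] V))
    (C : Set V) (hCclosed : IsClosed C) (hCconv : Convex ℝ C)
    (hCcone : ∀ x ∈ C, ∀ a : ℝ, 0 ≤ a → a • x ∈ C)
    (hCint : (interior C).Nonempty)
    (A : Set (Set V))
    (hA : ∀ H ∈ A, ∃ f : V →ₗ[ℝ] ℝ, f ≠ 0 ∧ H = {x | f x = 0})
    (T : Set V) (hT : T = ⋃ g : G, ρ g '' C)
    (hTconv : Convex ℝ (interior T))
    (hlocfin : ∀ x ∈ interior T, ∃ U : Set V, IsOpen U ∧ x ∈ U ∧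
      {H | H ∈ A ∧ (H ∩ U).Nonempty}.Finite)
    (hcover : interior T \ (⋃ H ∈ A, H) ⊆ ⋃ g : G, ρ g '' interior C) :
    interior T = convexHull ℝ (⋃ g : G, ρ g '' interior C) := by
  choose! f hf0 hfH using hA
  apply Set.Subset.antisymm
  · intro x hx
    obtain ⟨U0, hU0open, hxU0, hfin⟩ := hlocfin x hx
    set S : Set (Set V) := {H | H ∈ A ∧ (H ∩ U0).Nonempty} with hS
    haveI : Countable ↥S := (hfin.countable).to_subtype
    -- good directions
    have hD : Dense (⋂ H : S, ({v : V | f H v ≠ - f H x} ∩ {v : V | f H v ≠ f H x})) := by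
      apply dense_iInter_of_isOpen
      · intro H
        have hc : Continuous (f (H : Set V)) := (f (H:Set V)).continuous_of_finiteDimensional
        exact ((isOpen_ne_fun hc continuous_const).inter (isOpen_ne_fun hc continuous_const))
      · intro H
        have hne : f (H : Set V) ≠ 0 := hf0 H H.2.1
        exact (dense_ne_level_aux _ hne _).inter_of_isOpen_left
          (dense_ne_level_aux _ hne _)
          (isOpen_ne_fun ((f (H:Set V)).continuous_of_finiteDimensional) continuous_const)
    -- ball inside U0 ∩ interior T
    obtain ⟨ε, hε, hball⟩ := Metric.isOpen_iff.1 (hU0open.inter isOpen_interior) x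
      ⟨hxU0, hx⟩
    obtain ⟨v, hvD, hvball⟩ := hD.exists_mem_open Metric.isOpen_ball
      ⟨0, Metric.mem_ball_self hε⟩
    have hmemball : ∀ w : V, ‖w - x‖ < ε → w ∈ U0 ∩ interior T := by
      intro w hw
      exact hball (by rwa [Metric.mem_ball, dist_eq_norm])
    have hvnorm : ‖v‖ < ε := by
      simpa [dist_eq_norm] using hvball
    have hy : x + v ∈ U0 ∩ interior T := hmemball _ (by simpa using hvnorm)
    have hz : x - v ∈ U0 ∩ interior T := by
      apply hmemball
      simpa [norm_sub_rev] using hvnorm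
    have hnotH : ∀ w : V, w ∈ U0 → (∀ H : S, f (H:Set V) w ≠ 0) → w ∉ ⋃ H ∈ A, H := by
      intro w hwU0 hfw hw
      simp only [Set.mem_iUnion] at hw
      obtain ⟨H, hHA, hwH⟩ := hw
      have hHS : H ∈ S := ⟨hHA, ⟨w, hwH, hwU0⟩⟩
      have := hfH H hHA
      rw [this] at hwH
      exact hfw ⟨H, hHS⟩ hwH
    have hycov : x + v ∈ ⋃ g : G, ρ g '' interior C := by
      apply hcover
      refine ⟨hy.2, hnotH _ hy.1 ?_⟩
      intro H
      have := (Set.mem_iInter.1 hvD H).1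
      simp only [Set.mem_setOf_eq] at this
      simp only [map_add]
      intro habs
      exact this (by linarith)
    have hzcov : x - v ∈ ⋃ g : G, ρ g '' interior C := by
      apply hcover
      refine ⟨hz.2, hnotH _ hz.1 ?_⟩
      intro H
      have := (Set.mem_iInter.1 hvD H).2
      simp only [Set.mem_setOf_eq] at this
      simp only [map_sub]
      intro habs
      exact this (by linarith)
    have hx' : x = (1/2 : ℝ) • (x + v) + (1/2 : ℝ) • (x - v) := by
      module
    rw [hx']
    exact (convex_convexHull ℝ _) (subset_convexHull ℝ _ hycov)
      (subset_convexHull ℝ _ hzcov) (by norm_num) (by norm_num) (by norm_num)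
  · apply convexHull_min _ hTconv
    apply Set.iUnion_subset
    intro g
    have hcont : ρ g '' interior C = interior (ρ g '' C) := by
      have := (LinearEquiv.toContinuousLinearEquiv (ρ g)).toHomeomorph.image_interior C
      simpa using this
    rw [hcont]
    apply interior_mono
    rw [hT]
    exact Set.subset_iUnion (fun g : G => ρ g '' C) g
end

section
/- (1) C and Č are closed convex cones, and their topological interiors (in Hom_R(RΛ_S,ℝ) and Hom_ℤ(RΛ_S,ℝ) respectively) are exactly C° and Č°, which are nonempty. (2) For w ∈ W: w·C° ∩ C° ≠ ∅ if and only if w = 1; and for w̌ ∈ W̌: w̌·Č° ∩ Č° ≠ ∅ if and only if w̌ = 1. (3) For each s ∈ S, the set of Z ∈ Hom_R(RΛ_S,ℝ) fixed by s is exactly the hyperplane H_{α_s}, and for each (b,s) ∈ Š, the set of Z ∈ Hom_ℤ(RΛ_S,ℝ) fixed by (b,s) is exactly the hyperplane Ȟ_{b·α_s}. -/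
open scoped BigOperators

noncomputable section

variable {R : Type*} [Ring R] {ι : Type*} [Fintype ι] [DecidableEq ι]
  {S : Type*} [Fintype S] [DecidableEq S] {W : Type*} [Group W]




set_option linter.unusedSectionVars false

section ConeTop

variable (X : Type*) [Fintype X] [DecidableEq X]

theorem coneC_isClosed : IsClosed (coneC X) := by
  have h : coneC X = ⋂ x, {Z : X → ℝ | 0 ≤ Z x} := by
    ext Z; simp [coneC, Set.mem_iInter]
  rw [h]
  exact isClosed_iInter fun x => isClosed_le continuous_const (continuous_apply x)

theorem coneC_convex : Convex ℝ (coneC X) := by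
  intro Z hZ Y hY a b ha hb _
  intro x
  have := add_nonneg (mul_nonneg ha (hZ x)) (mul_nonneg hb (hY x))
  simpa using this

theorem coneC_smul {Z : X → ℝ} (hZ : Z ∈ coneC X) {a : ℝ} (ha : 0 ≤ a) :
    a • Z ∈ coneC X := fun x => by
  have := mul_nonneg ha (hZ x); simpa using this

theorem coneCo_isOpen : IsOpen (coneCo X) := by
  have h : coneCo X = ⋂ x, {Z : X → ℝ | 0 < Z x} := by
    ext Z; simp [coneCo, Set.mem_iInter]
  rw [h]
  exact isOpen_iInter_of_finite fun x => isOpen_lt continuous_const (continuous_apply x)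

theorem interior_coneC : interior (coneC X) = coneCo X := by
  apply subset_antisymm
  · intro Z hZ x
    have hZC : Z ∈ coneC X := interior_subset hZ
    rcases lt_or_eq_of_le (hZC x) with h | h
    · exact h
    exfalso
    have hnh : coneC X ∈ nhds Z := mem_interior_iff_mem_nhds.mp hZ
    have hcont : Continuous fun t : ℝ => Z - t • (Pi.single x (1 : ℝ) : X → ℝ) :=
      continuous_const.sub (continuous_id.smul continuous_const)
    have hpre : (fun t : ℝ => Z - t • (Pi.single x (1 : ℝ) : X → ℝ)) ⁻¹' coneC X ∈ nhds (0 : ℝ) := by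
      apply hcont.continuousAt.preimage_mem_nhds
      simpa using hnh
    rcases Metric.mem_nhds_iff.mp hpre with ⟨ε, hε, hball⟩
    have hmem : (ε / 2 : ℝ) ∈ Metric.ball (0 : ℝ) ε := by
      rw [Metric.mem_ball, Real.dist_eq, sub_zero, abs_of_nonneg (by linarith : (0:ℝ) ≤ ε / 2)]
      linarith
    have := hball hmem x
    simp only [Set.mem_preimage] at this
    have h2 : (Z - (ε / 2) • (Pi.single x (1 : ℝ) : X → ℝ)) x = -(ε / 2) := by
      simp [← h]
    rw [h2] at this
    linarith [half_pos hε]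
  · exact interior_maximal (fun Z hZ x => le_of_lt (hZ x)) (coneCo_isOpen X)

theorem coneCo_nonempty : (coneCo X).Nonempty := ⟨fun _ => 1, fun _ => one_pos⟩

end ConeTop

section XZseq

open Real

/-- dihedral coefficient dynamics -/
def XZ (c : ℝ) : ℕ → ℝ × ℝ
  | 0 => (1, 0)
  | (k+1) =>
      if Even k then ((XZ c k).1, (XZ c k).1 - (XZ c k).2)
      else (c * (XZ c k).2 - (XZ c k).1, (XZ c k).2)

theorem XZ_one (c : ℝ) : XZ c 1 = (1, 1) := by
  simp only [XZ]
  norm_num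

theorem XZ_nonneg_le_one (c : ℝ) {k : ℕ} (hk : k ≤ 1) :
    0 ≤ (XZ c k).1 ∧ 0 ≤ (XZ c k).2 := by
  interval_cases k
  · simp only [XZ]; norm_num
  · rw [XZ_one]; norm_num

theorem XZ_inv_inf {c : ℝ} (hc : 4 ≤ c) (k : ℕ) :
    (Even k → 0 ≤ (XZ c k).2 ∧ 1 ≤ (XZ c k).1 - (XZ c k).2 ∧
      c * (XZ c k).2 ≤ (c - 2) * (XZ c k).1) ∧
    (¬Even k → 1 ≤ (XZ c k).1 ∧ 1 ≤ (XZ c k).2 ∧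
      2 * (XZ c k).1 ≤ c * (XZ c k).2) := by
  induction k with
  | zero =>
      refine ⟨fun _ => ?_, fun h => absurd Even.zero h⟩
      simp only [XZ]
      norm_num
      linarith
  | succ k ih =>
    by_cases hk : Even k
    · have h := ih.1 hk
      have hodd : ¬Even (k + 1) := by simp [Nat.even_add_one, hk]
      constructor
      · intro h'; exact absurd h' hodd
      · intro _
        simp only [XZ, if_pos hk]
        refine ⟨by linarith [h.1, h.2.1], h.2.1, by nlinarith [h.2.2]⟩
    · have h := ih.2 hk
      have heven : Even (k + 1) := by simpa [Nat.even_add_one] using hk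
      constructor
      · intro _
        simp only [XZ, if_neg hk]
        obtain ⟨h1, h2, h3⟩ := h
        refine ⟨by linarith, ?_, ?_⟩
        · nlinarith
        · nlinarith
      · intro h'; exact absurd heven h'

theorem XZ_nonneg_inf {c : ℝ} (hc : 4 ≤ c) (k : ℕ) :
    0 ≤ (XZ c k).1 ∧ 0 ≤ (XZ c k).2 := by
  have h := XZ_inv_inf hc k
  by_cases hk : Even k
  · obtain ⟨h1, h2, _⟩ := h.1 hk
    exact ⟨by linarith, h1⟩
  · obtain ⟨h1, h2, _⟩ := h.2 hk
    exact ⟨by linarith, by linarith⟩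

theorem XZ_closed_fin {m : ℕ} (hm : 3 ≤ m) (k : ℕ) :
    (XZ (4 * cos (π / m) ^ 2) k).1 =
      (if Even k then sin ((k + 1) * (π / m)) else sin (k * (π / m))) / sin (π / m) ∧
    (XZ (4 * cos (π / m) ^ 2) k).2 =
      (if Even k then sin (k * (π / m)) else sin ((k + 1) * (π / m))) / sin (2 * (π / m)) := by
  have hm0 : (0 : ℝ) < m := by positivity
  set θ := π / m with hθ
  have hθ0 : 0 < θ := by positivity
  have hm3 : (3:ℝ) ≤ m := by exact_mod_cast hm
  have hθπ : θ < π := by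
    rw [hθ]
    exact div_lt_self Real.pi_pos (by linarith)
  have h2θπ : 2 * θ < π := by
    rw [hθ, show 2 * (π / m) = 2 * π / m by ring, div_lt_iff₀ hm0]
    nlinarith [Real.pi_pos]
  have hsθ : 0 < sin θ := Real.sin_pos_of_pos_of_lt_pi hθ0 hθπ
  have hs2θ : 0 < sin (2 * θ) := Real.sin_pos_of_pos_of_lt_pi (by linarith) h2θπ
  have hs2 : sin (2 * θ) = 2 * sin θ * cos θ := Real.sin_two_mul θ
  have hcθ : 0 < cos θ := by
    nlinarith [hsθ, hs2θ, hs2, Real.sin_le_one θ]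
  induction k with
  | zero => simp [XZ, hsθ.ne']
  | succ k ih =>
    have key : sin ((k + 2) * θ) = 2 * cos θ * sin ((k + 1) * θ) - sin (k * θ) := by
      have e1 : ((k : ℝ) + 2) * θ = ((k + 1) * θ) + θ := by ring
      have e2 : (k : ℝ) * θ = ((k + 1) * θ) - θ := by ring
      rw [e1, e2, Real.sin_add, Real.sin_sub]; ring
    obtain ⟨ih1, ih2⟩ := ih
    have hcast : ((k : ℝ) + 1 + 1) = (k : ℝ) + 2 := by ring
    by_cases hk : Even k
    · have hodd : ¬Even (k + 1) := by simp [Nat.even_add_one, hk]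
      rw [if_pos hk] at ih1 ih2
      have identity : sin (((k : ℝ) + 1) * θ) / sin θ - sin ((k : ℝ) * θ) / sin (2 * θ)
          = sin (((k : ℝ) + 2) * θ) / sin (2 * θ) := by
        rw [key, hs2]
        field_simp
      constructor
      · simp only [XZ, if_pos hk, ih1, if_neg hodd]
        push_cast
        try ring_nf
      · simp only [XZ, if_pos hk, ih1, ih2, if_neg hodd]
        push_cast
        rw [hcast]
        exact identity
    · have heven : Even (k + 1) := by simpa [Nat.even_add_one] using hk
      rw [if_neg hk] at ih1 ih2
      have identity : (4 * cos θ ^ 2) * (sin (((k : ℝ) + 1) * θ) / sin (2 * θ))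
            - sin ((k : ℝ) * θ) / sin θ
          = sin (((k : ℝ) + 2) * θ) / sin θ := by
        rw [key, hs2]
        field_simp
        ring
      constructor
      · simp only [XZ, if_neg hk, ih1, ih2, if_pos heven]
        push_cast
        rw [hcast]
        exact identity
      · simp only [XZ, if_neg hk, ih2, if_pos heven]
        push_cast
        try ring_nf

theorem XZ_nonneg_fin {m : ℕ} (hm : 3 ≤ m) {k : ℕ} (hk : k + 1 ≤ m) :
    0 ≤ (XZ (4 * cos (π / m) ^ 2) k).1 ∧ 0 ≤ (XZ (4 * cos (π / m) ^ 2) k).2 := by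
  have hm0 : (0 : ℝ) < m := by positivity
  have hm3 : (3:ℝ) ≤ m := by exact_mod_cast hm
  have hsin : ∀ j : ℕ, j ≤ m → 0 ≤ sin (j * (π / m)) := by
    intro j hj
    apply Real.sin_nonneg_of_nonneg_of_le_pi
    · positivity
    · calc (j : ℝ) * (π / m) ≤ m * (π / m) := by
            apply mul_le_mul_of_nonneg_right _ (by positivity)
            exact_mod_cast hj
        _ = π := by field_simp
  have hθ0 : 0 < π / m := by positivity
  have hθπ : π / m < π := div_lt_self Real.pi_pos (by linarith)
  have hsθ : 0 < sin (π / m) := Real.sin_pos_of_pos_of_lt_pi hθ0 hθπ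
  have h2θπ : 2 * (π / m) < π := by
    rw [show 2 * (π / m) = 2 * π / m by ring, div_lt_iff₀ hm0]
    nlinarith [Real.pi_pos]
  have hs2θ : 0 < sin (2 * (π / m)) := Real.sin_pos_of_pos_of_lt_pi (by linarith) h2θπ
  obtain ⟨h1, h2⟩ := XZ_closed_fin hm k
  have hks : 0 ≤ Real.sin (((k:ℝ) + 1) * (π / m)) := by
    have := hsin (k+1) (by omega)
    push_cast at this
    exact this
  constructor
  · rw [h1]
    apply div_nonneg _ hsθ.le
    rcases Nat.even_or_odd k with hk | hk
    · rw [if_pos hk]; exact hks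
    · rw [if_neg (Nat.not_even_iff_odd.mpr hk)]
      exact hsin k (by omega)
  · rw [h2]
    apply div_nonneg _ hs2θ.le
    rcases Nat.even_or_odd k with hk | hk
    · rw [if_pos hk]; exact hsin k (by omega)
    · rw [if_neg (Nat.not_even_iff_odd.mpr hk)]
      exact hks

end XZseq

section Tits

open Real CoxeterSystem

variable {X : Type*} [Fintype X] [DecidableEq X] {Wg : Type*} [Group Wg]
  {M : CoxeterMatrix X}

/-- root functionals of the dual representation -/
def rt (ρ : Wg →* ((X → ℝ) ≃ₗ[ℝ] (X → ℝ))) (w : Wg) (x y : X) : ℝ :=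
  ρ w⁻¹ (Pi.single y 1) x

theorem rt_expand (ρ : Wg →* ((X → ℝ) ≃ₗ[ℝ] (X → ℝ))) (w : Wg) (Z : X → ℝ) (x : X) :
    ρ w⁻¹ Z x = ∑ y, Z y * rt ρ w x y := by
  conv_lhs => rw [← Finset.univ_sum_single Z, map_sum]
  rw [Finset.sum_apply]
  congr 1
  ext y
  have h : (Pi.single y (Z y) : X → ℝ) = Z y • (Pi.single y (1:ℝ) : X → ℝ) := by
    rw [← Pi.single_smul, smul_eq_mul, mul_one]
  rw [h, map_smul]
  simp [rt, smul_eq_mul]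

theorem rt_one (ρ : Wg →* ((X → ℝ) ≃ₗ[ℝ] (X → ℝ))) (x y : X) :
    rt ρ (1 : Wg) x y = if x = y then 1 else 0 := by
  unfold rt
  rw [inv_one, map_one]
  show (Pi.single y (1:ℝ) : X → ℝ) x = _
  rw [Pi.single_apply]

theorem rt_nonneg_one (ρ : Wg →* ((X → ℝ) ≃ₗ[ℝ] (X → ℝ))) (x y : X) :
    0 ≤ rt ρ (1 : Wg) x y := by
  rw [rt_one]; split <;> norm_num

variable (cs : CoxeterSystem M Wg) (A : X → X → ℝ) (ρ : Wg →* ((X → ℝ) ≃ₗ[ℝ] (X → ℝ)))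

theorem rt_mul_simple
    (hρ : ∀ (i : X) (Z : X → ℝ) (y : X), ρ (cs.simple i) Z y = Z y - A i y * Z i)
    (w : Wg) (i x y : X) :
    rt ρ (w * cs.simple i) x y = rt ρ w x y - A i x * rt ρ w i y := by
  unfold rt
  rw [mul_inv_rev, cs.inv_simple, map_mul]
  have : (ρ (cs.simple i) * ρ w⁻¹) (Pi.single y 1) = ρ (cs.simple i) (ρ w⁻¹ (Pi.single y 1)) := rfl
  rw [this, hρ]

theorem rt_inv_apply (ρ : Wg →* ((X → ℝ) ≃ₗ[ℝ] (X → ℝ))) (w : Wg) (Z : X → ℝ) :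
    ρ w⁻¹ (ρ w Z) = Z := by
  have : ρ w⁻¹ (ρ w Z) = (ρ w⁻¹ * ρ w) Z := rfl
  rw [this, ← map_mul, inv_mul_cancel, map_one]
  rfl

theorem rt_ne_zero (ρ : Wg →* ((X → ℝ) ≃ₗ[ℝ] (X → ℝ))) (w : Wg) (x : X) :
    ∃ y, rt ρ w x y ≠ 0 := by
  by_contra h
  push_neg at h
  have h2 := rt_expand ρ w (ρ w (Pi.single x 1)) x
  rw [rt_inv_apply] at h2
  simp only [h, mul_zero, Finset.sum_const_zero] at h2
  rw [Pi.single_eq_same] at h2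
  exact one_ne_zero h2

theorem rt_alt
    (hdiag : ∀ x, A x x = 2)
    (hρ : ∀ (i : X) (Z : X → ℝ) (y : X), ρ (cs.simple i) Z y = Z y - A i y * Z i)
    (x t : X) (k : ℕ) (g : Wg) (y : X) :
    rt ρ (g * cs.wordProd (alternatingWord x t k)) x y
      = (XZ (A x t * A t x) k).1 * rt ρ g x y
        + (-(A t x) * (XZ (A x t * A t x) k).2) * rt ρ g t y := by
  induction k generalizing g with
  | zero =>
    simp only [alternatingWord, wordProd_nil, mul_one, XZ]
    ring
  | succ k ih =>
    rw [alternatingWord_succ', wordProd_cons, ← mul_assoc]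
    rw [ih (g * cs.simple (if Even k then t else x))]
    by_cases hk : Even k
    · rw [if_pos hk]
      rw [rt_mul_simple cs A ρ hρ g t x y, rt_mul_simple cs A ρ hρ g t t y]
      simp only [XZ, if_pos hk, hdiag t]
      ring
    · rw [if_neg hk]
      rw [rt_mul_simple cs A ρ hρ g x x y, rt_mul_simple cs A ρ hρ g x t y]
      simp only [XZ, if_neg hk, hdiag x]
      ring

/-- The positive root theorem. -/
theorem rt_nonneg
    (hdiag : ∀ x, A x x = 2)
    (hoff : ∀ x y, x ≠ y → A x y ≤ 0)
    (hfin : ∀ x y, x ≠ y → M x y ≠ 0 →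
      A x y * A y x = 4 * Real.cos (Real.pi / (M x y : ℝ)) ^ 2)
    (hinf : ∀ x y, x ≠ y → M x y = 0 → 4 ≤ A x y * A y x)
    (hρ : ∀ (i : X) (Z : X → ℝ) (y : X), ρ (cs.simple i) Z y = Z y - A i y * Z i) :
    ∀ (w : Wg) (x : X), cs.length w < cs.length (w * cs.simple x) →
      ∀ y, 0 ≤ rt ρ w x y := by
  suffices H : ∀ (n : ℕ) (w : Wg) (x : X), cs.length w = n →
      cs.length w < cs.length (w * cs.simple x) → ∀ y, 0 ≤ rt ρ w x y by
    intro w x h y; exact H (cs.length w) w x rfl h y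
  intro n
  induction n using Nat.strong_induction_on with
  | _ n ih =>
    intro w x hn hlt y
    by_cases hw : w = 1
    · subst hw; exact rt_nonneg_one ρ x y
    obtain ⟨t, ht⟩ := cs.exists_rightDescent_of_ne_one hw
    have htx : t ≠ x := by
      rintro rfl
      exact absurd hlt (not_lt.mpr (le_of_lt ht))
    -- inner loop
    have inner : ∀ (m : ℕ) (u : Wg) (k : ℕ), cs.length u = m →
        w = u * cs.wordProd (alternatingWord x t k) →
        cs.length w = cs.length u + k → 1 ≤ k → 0 ≤ rt ρ w x y := by
      intro m
      induction m using Nat.strong_induction_on with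
      | _ m ihm =>
        intro u k hm hw1 hw2 hk1
        by_cases hdesc : cs.length (u * cs.simple (if Even k then t else x)) < cs.length u
        · -- extend the alternating word
          set c₀ := if Even k then t else x with hc₀
          have hlen : cs.length (u * cs.simple c₀) + 1 = cs.length u :=
            cs.isRightDescent_iff.mp hdesc
          refine ihm (cs.length (u * cs.simple c₀)) (by omega) (u * cs.simple c₀) (k + 1)
            rfl ?_ (by omega) (by omega)
          rw [alternatingWord_succ' x t k, wordProd_cons, ← hc₀, ← mul_assoc,
            cs.simple_mul_simple_cancel_right]
          exact hw1
        · -- STOP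
          have hstop : cs.length u < cs.length (u * cs.simple (if Even k then t else x)) :=
            lt_of_le_of_ne (not_lt.mp hdesc)
              (Ne.symm (cs.length_mul_simple_ne u (if Even k then t else x)))
          obtain ⟨k', rfl⟩ : ∃ k', k = k' + 1 := ⟨k - 1, by omega⟩
          have hred : cs.length (cs.wordProd (alternatingWord x t (k' + 1))) = k' + 1 := by
            have h1 := cs.length_wordProd_le (alternatingWord x t (k' + 1))
            rw [length_alternatingWord] at h1
            have h2 := cs.length_mul_le u (cs.wordProd (alternatingWord x t (k' + 1)))
            rw [← hw1] at h2
            omega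
          have hkM : M x t = 0 ∨ k' + 2 ≤ M x t := by
            by_cases hM0 : M x t = 0
            · exact Or.inl hM0
            right
            have hred' : cs.IsReduced (alternatingWord x t (k' + 1)) := by
              unfold CoxeterSystem.IsReduced
              rw [length_alternatingWord]
              exact hred
            have hle : k' + 1 ≤ M x t := by
              by_contra hgt
              exact (cs.not_isReduced_alternatingWord x t hM0 (by omega)) hred'
            rcases eq_or_lt_of_le hle with heq | hlt2
            · exfalso
              have hbraid : cs.wordProd (alternatingWord x t (M x t))
                  = cs.wordProd (alternatingWord t x (M x t)) := by
                have h := cs.wordProd_braidWord_eq x t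
                unfold CoxeterSystem.braidWord at h
                rwa [M.symmetric t x] at h
              have hconcat : alternatingWord t x (M x t)
                  = (alternatingWord x t (M x t - 1)).concat x := by
                have h5 : M x t = (M x t - 1) + 1 := by omega
                conv_lhs => rw [h5]
                rw [alternatingWord_succ]
              have hwx : w * cs.simple x = u * cs.wordProd (alternatingWord x t (M x t - 1)) := by
                rw [hw1, heq, hbraid, hconcat, wordProd_concat, ← mul_assoc,
                  mul_assoc, cs.simple_mul_simple_self, mul_one]
              have hb1 := cs.length_mul_le u (cs.wordProd (alternatingWord x t (M x t - 1)))
              have hb2 := cs.length_wordProd_le (alternatingWord x t (M x t - 1))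
              rw [length_alternatingWord] at hb2
              rw [← hwx] at hb1
              omega
            · omega
          -- the first letter of the alternating word
          have hz : cs.length u < cs.length (u * cs.simple (if Even k' then t else x)) := by
            have hw' : u * cs.simple (if Even k' then t else x)
                = w * (cs.wordProd (alternatingWord x t k'))⁻¹ := by
              rw [hw1, alternatingWord_succ' x t k', wordProd_cons]
              group
            have hge := cs.length_mul_ge_length_sub_length w
              ((cs.wordProd (alternatingWord x t k'))⁻¹)
            rw [← hw', cs.length_inv] at hge
            have hb2 := cs.length_wordProd_le (alternatingWord x t k')
            rw [length_alternatingWord] at hb2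
            omega
          have hxt2 : cs.length u < cs.length (u * cs.simple x) ∧
              cs.length u < cs.length (u * cs.simple t) := by
            by_cases hk' : Even k'
            · have h1 : ¬ Even (k' + 1) := by simp [Nat.even_add_one, hk']
              rw [if_pos hk'] at hz
              rw [if_neg h1] at hstop
              exact ⟨hstop, hz⟩
            · have h1 : Even (k' + 1) := by simpa [Nat.even_add_one] using hk'
              rw [if_neg hk'] at hz
              rw [if_pos h1] at hstop
              exact ⟨hz, hstop⟩
          have hIHx : ∀ y', 0 ≤ rt ρ u x y' :=
            fun y' => ih (cs.length u) (by omega) u x rfl hxt2.1 y'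
          have hIHt : ∀ y', 0 ≤ rt ρ u t y' :=
            fun y' => ih (cs.length u) (by omega) u t rfl hxt2.2 y'
          rw [hw1, rt_alt cs A ρ hdiag hρ x t (k' + 1) u y]
          have hb : 0 ≤ -(A t x) := by linarith [hoff t x htx]
          have hXZ : 0 ≤ (XZ (A x t * A t x) (k' + 1)).1
              ∧ 0 ≤ (XZ (A x t * A t x) (k' + 1)).2 := by
            rcases hkM with hM0 | hkM
            · exact XZ_nonneg_inf (hinf x t (Ne.symm htx) hM0) (k' + 1)
            · by_cases hksmall : k' = 0
              · subst hksmall; exact XZ_nonneg_le_one _ (by omega)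
              · have hm3 : 3 ≤ M x t := by omega
                rw [hfin x t (Ne.symm htx) (by omega)]
                exact XZ_nonneg_fin hm3 (by omega)
          exact add_nonneg (mul_nonneg hXZ.1 (hIHx y))
            (mul_nonneg (mul_nonneg hb hXZ.2) (hIHt y))
    refine inner (cs.length (w * cs.simple t)) (w * cs.simple t) 1 rfl ?_ ?_ le_rfl
    · have : alternatingWord x t 1 = [t] := rfl
      rw [this, wordProd_singleton, mul_assoc, cs.simple_mul_simple_self, mul_one]
    · have := cs.isRightDescent_iff.mp ht
      have h1 : alternatingWord x t 1 = [t] := rfl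
      omega

end Tits

section Tits2

open Real CoxeterSystem

variable {X : Type*} [Fintype X] [DecidableEq X] {Wg : Type*} [Group Wg]
  {M : CoxeterMatrix X}
variable (cs : CoxeterSystem M Wg) (A : X → X → ℝ) (ρ : Wg →* ((X → ℝ) ≃ₗ[ℝ] (X → ℝ)))

theorem tits_faithful_s11
    (hdiag : ∀ x, A x x = 2)
    (hoff : ∀ x y, x ≠ y → A x y ≤ 0)
    (hfin : ∀ x y, x ≠ y → M x y ≠ 0 →
      A x y * A y x = 4 * Real.cos (Real.pi / (M x y : ℝ)) ^ 2)
    (hinf : ∀ x y, x ≠ y → M x y = 0 → 4 ≤ A x y * A y x)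
    (hρ : ∀ (i : X) (Z : X → ℝ) (y : X), ρ (cs.simple i) Z y = Z y - A i y * Z i)
    (w : Wg) (Z : X → ℝ) (hZ : ∀ x, 0 < Z x) (hWZ : ∀ x, 0 < ρ w Z x) : w = 1 := by
  by_contra hw
  obtain ⟨x, hx⟩ := cs.exists_rightDescent_of_ne_one hw
  have h2 := cs.isRightDescent_iff.mp hx
  have hux : w = (w * cs.simple x) * cs.simple x := by
    rw [cs.simple_mul_simple_cancel_right]
  have h1 : cs.length (w * cs.simple x) < cs.length ((w * cs.simple x) * cs.simple x) := by
    rw [cs.simple_mul_simple_cancel_right]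
    omega
  have hpos := rt_nonneg cs A ρ hdiag hoff hfin hinf hρ (w * cs.simple x) x h1
  obtain ⟨y₀, hy₀⟩ := rt_ne_zero ρ (w * cs.simple x) x
  have hrtw : ∀ y, rt ρ w x y = -(rt ρ (w * cs.simple x) x y) := by
    intro y
    conv_lhs => rw [hux]
    rw [rt_mul_simple cs A ρ hρ (w * cs.simple x) x x y, hdiag x]
    ring
  have hexp := rt_expand ρ w (ρ w Z) x
  rw [rt_inv_apply] at hexp
  have hsum : ∑ y, (ρ w Z) y * rt ρ w x y < 0 := by
    have hle : ∀ y ∈ Finset.univ, (ρ w Z) y * rt ρ w x y ≤ (0 : ℝ) := by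
      intro y _
      rw [hrtw y]
      have := mul_nonneg (le_of_lt (hWZ y)) (hpos y)
      linarith
    have hstrict : (ρ w Z) y₀ * rt ρ w x y₀ < 0 := by
      rw [hrtw y₀]
      have h3 : 0 < rt ρ (w * cs.simple x) x y₀ := lt_of_le_of_ne (hpos y₀) (Ne.symm hy₀)
      have := mul_pos (hWZ y₀) h3
      linarith
    calc ∑ y, (ρ w Z) y * rt ρ w x y < ∑ _y : X, (0:ℝ) :=
          Finset.sum_lt_sum hle ⟨y₀, Finset.mem_univ y₀, hstrict⟩
      _ = 0 := by simp
  rw [← hexp] at hsum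
  exact absurd (hZ x) (not_lt.mpr (le_of_lt hsum))

theorem tits_fixed
    (hdiag : ∀ x, A x x = 2)
    (hρ : ∀ (i : X) (Z : X → ℝ) (y : X), ρ (cs.simple i) Z y = Z y - A i y * Z i)
    (x : X) : {Z : X → ℝ | ρ (cs.simple x) Z = Z} = wallH X x := by
  ext Z
  simp only [Set.mem_setOf_eq, wallH]
  constructor
  · intro h
    have := congrFun h x
    rw [hρ x Z x, hdiag x] at this
    linarith
  · intro h0
    funext y
    rw [hρ x Z y, h0, mul_zero, sub_zero]

end Tits2

section FusionFacts

variable {R : Type*} [Ring R] {ι : Type*} [Fintype ι] [DecidableEq ι]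
  {S : Type*} [Fintype S] [DecidableEq S] {W : Type*} [Group W]

theorem FusionData.repr_mul_nonneg (F : FusionData R ι) {r : R} (h : F.nonneg r) (j i : ι) :
    0 ≤ F.b.repr (F.b j * r) i := by
  have hr : r = ∑ k, (F.b.repr r k) • F.b k := (F.b.sum_repr r).symm
  have hmul : F.b j * r = ∑ k, (F.b.repr r k) • (F.b j * F.b k) := by
    conv_lhs => rw [hr, Finset.mul_sum]
    congr 1
    ext k
    rw [mul_smul_comm]
  rw [hmul, map_sum, Finset.sum_apply']
  apply Finset.sum_nonneg
  intro k _
  rw [map_zsmul, Finsupp.smul_apply, smul_eq_mul]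
  exact mul_nonneg (h k) (F.c_nonneg j k i)

theorem GeomSetting.FP_nonneg (G : GeomSetting R ι S W) {r : R} (h : G.FD.nonneg r) :
    0 ≤ G.FP r := by
  have hr : r = ∑ i, (G.FD.b.repr r i) • G.FD.b i := (G.FD.b.sum_repr r).symm
  rw [hr, map_sum]
  apply Finset.sum_nonneg
  intro i _
  rw [map_zsmul, zsmul_eq_mul]
  exact mul_nonneg (by exact_mod_cast h i) (le_trans zero_le_one (G.FP_basis i))

variable (G : GeomSetting R ι S W)

theorem GeomSetting.FP_cartan_diag (s : S) : G.FP (G.cartan s s) = 2 := by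
  unfold GeomSetting.cartan
  rw [G.cartan_diag s]
  rw [show (2 : R) = 1 + 1 by norm_num, map_add, map_one]
  norm_num

theorem GeomSetting.FP_cartan_nonpos {s t : S} (h : s ≠ t) : G.FP (G.cartan s t) ≤ 0 := by
  have h1 := G.FP_nonneg (G.cartan_nonneg s t h)
  rw [map_neg] at h1
  unfold GeomSetting.cartan
  linarith

theorem GeomSetting.FP_cartan_symm {s t : S} (h : s ≠ t) :
    G.FP (G.cartan t s) = G.FP (G.cartan s t) := by
  unfold GeomSetting.cartan
  rw [G.cartan_star s t h, G.FP_star]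

theorem GeomSetting.rcheck_diag_s11 (p : ι × S) : G.rcheck p p = 2 := by
  simp [GeomSetting.rcheck]

theorem GeomSetting.rcheck_nonpos_s11 {p q : ι × S} (hpq : p ≠ q) : G.rcheck p q ≤ 0 := by
  unfold GeomSetting.rcheck
  by_cases h2 : p.2 = q.2
  · rw [if_pos h2]
    have h1 : p.1 ≠ q.1 := fun h1 => hpq (Prod.ext h1 h2)
    rw [if_neg h1]
  · rw [if_neg h2]
    have hnn := G.FD.repr_mul_nonneg (G.cartan_nonneg p.2 q.2 h2) q.1 p.1
    rw [mul_neg, map_neg, Finsupp.neg_apply] at hnn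
    unfold GeomSetting.cartan
    linarith

theorem GeomSetting.mcheck_diag_s11 (p : ι × S) : G.mcheck p p = 1 := by
  simp [GeomSetting.mcheck]

theorem GeomSetting.mcheck_ne_one {p q : ι × S} (h : p ≠ q) : G.mcheck p q ≠ 1 := by
  unfold GeomSetting.mcheck
  rw [if_neg h]
  split_ifs <;> norm_num

theorem GeomSetting.gen_mul_pow (p q : ι × S) :
    (G.gen p * G.gen q) ^ G.mcheck p q = 1 := by
  have hmem : (FreeGroup.of p * FreeGroup.of q) ^ G.mcheck p q
      ∈ Subgroup.normalClosure G.rels :=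
    Subgroup.subset_normalClosure ⟨(p, q), rfl⟩
  have h : (G.gen p * G.gen q) ^ G.mcheck p q
      = PresentedGroup.mk G.rels ((FreeGroup.of p * FreeGroup.of q) ^ G.mcheck p q) := by
    rw [map_pow, map_mul]
    rfl
  rw [h]
  exact (QuotientGroup.eq_one_iff _).mpr hmem

end FusionFacts

section FstepFacts

/-- coordinate dynamics of the product of two reflections -/
def fstep (a b : ℝ) (v : ℝ × ℝ) : ℝ × ℝ :=
  (-v.1 + b * v.2, -a * v.1 + (a * b - 1) * v.2)

theorem fstep_two {a b : ℝ} (h1 : (fstep a b)^[2] (1, 0) = (1, 0))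
    (h2 : (fstep a b)^[2] (0, 1) = (0, 1)) : a = 0 ∧ b = 0 := by
  have e2 : ∀ v, (fstep a b)^[2] v = fstep a b (fstep a b v) := by
    intro v
    rw [show (2 : ℕ) = 1 + 1 from rfl, Function.iterate_succ_apply', Function.iterate_one]
  rw [e2] at h1 h2
  have s1 : fstep a b (fstep a b (1, 0)) = (1 - a * b, 2 * a - a * (a * b)) := by
    simp only [fstep, Prod.mk.injEq]
    constructor <;> ring
  have s2 : fstep a b (fstep a b (0, 1)) = (a * b * b - 2 * b, -(a*b) + (a * b - 1)^2) := by
    simp only [fstep, Prod.mk.injEq]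
    constructor <;> ring
  rw [s1, Prod.mk.injEq] at h1
  rw [s2, Prod.mk.injEq] at h2
  obtain ⟨h11, h12⟩ := h1
  obtain ⟨h21, _⟩ := h2
  have hab : a * b = 0 := by linarith
  have ha : a = 0 := by
    have : a * (a * b) = 0 := by rw [hab, mul_zero]
    linarith
  have hb : b = 0 := by
    have : a * b * b = 0 := by rw [hab, zero_mul]
    linarith
  exact ⟨ha, hb⟩

theorem fstep_three {b : ℝ} (h1 : (fstep (-1) b)^[3] (1, 0) = (1, 0)) : b = -1 := by
  have e3 : (fstep (-1) b)^[3] (1, 0)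
      = fstep (-1) b (fstep (-1) b (fstep (-1) b (1, 0))) := by
    rw [show (3 : ℕ) = 2 + 1 from rfl, Function.iterate_succ_apply',
      show (2 : ℕ) = 1 + 1 from rfl, Function.iterate_succ_apply', Function.iterate_one]
  rw [e3] at h1
  have s1 : fstep (-1) b (fstep (-1) b (fstep (-1) b (1, 0)))
      = (-1 - 3 * b - b ^ 2, b ^ 2 + 4 * b + 3) := by
    simp only [fstep, Prod.mk.injEq]
    constructor <;> ring
  rw [s1, Prod.mk.injEq] at h1
  obtain ⟨e1, e2⟩ := h1
  linarith

end FstepFacts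

section WcheckRel

variable {R : Type*} [Ring R] {ι : Type*} [Fintype ι] [DecidableEq ι]
  {S : Type*} [Fintype S] [DecidableEq S] {W : Type*} [Group W]
variable (G : GeomSetting R ι S W)
  (rhoF : G.Wcheck →* (((ι × S) → ℝ) ≃ₗ[ℝ] ((ι × S) → ℝ)))
  (hrhoF : ∀ (p : ι × S) (Z : (ι × S) → ℝ) (q : ι × S),
    rhoF (G.gen p) Z q = Z q - (G.rcheck p q : ℝ) * Z p)

include hrhoF

theorem Tcoord {p q : ι × S} (hpq : p ≠ q) (Z : (ι × S) → ℝ) :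
    (((rhoF (G.gen p) * rhoF (G.gen q)) Z) p, ((rhoF (G.gen p) * rhoF (G.gen q)) Z) q)
      = fstep (G.rcheck p q : ℝ) (G.rcheck q p : ℝ) (Z p, Z q) := by
  have happ : ∀ Y : (ι × S) → ℝ, (rhoF (G.gen p) * rhoF (G.gen q)) Y
      = rhoF (G.gen p) (rhoF (G.gen q) Y) := fun _ => rfl
  rw [happ]
  have hp := hrhoF p (rhoF (G.gen q) Z) p
  have hq := hrhoF p (rhoF (G.gen q) Z) q
  have hqp := hrhoF q Z p
  have hqq := hrhoF q Z q
  rw [G.rcheck_diag_s11 p] at hp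
  rw [G.rcheck_diag_s11 q] at hqq
  unfold fstep
  rw [hp, hq, hqp, hqq]
  push_cast
  rw [Prod.mk.injEq]
  constructor <;> ring

theorem Tpow_coord {p q : ι × S} (hpq : p ≠ q) (n : ℕ) (Z : (ι × S) → ℝ) :
    ((((rhoF (G.gen p) * rhoF (G.gen q)) ^ n) Z) p, ((((rhoF (G.gen p) * rhoF (G.gen q)) ^ n)) Z) q)
      = (fstep (G.rcheck p q : ℝ) (G.rcheck q p : ℝ))^[n] (Z p, Z q) := by
  induction n generalizing Z with
  | zero =>
    rw [pow_zero, Function.iterate_zero]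
    rfl
  | succ n ihn =>
    rw [pow_succ]
    have happ : ((rhoF (G.gen p) * rhoF (G.gen q)) ^ n * (rhoF (G.gen p) * rhoF (G.gen q))) Z
        = ((rhoF (G.gen p) * rhoF (G.gen q)) ^ n) ((rhoF (G.gen p) * rhoF (G.gen q)) Z) := rfl
    rw [happ, ihn, Function.iterate_succ_apply, Tcoord G rhoF hrhoF hpq]

theorem rel_coord {p q : ι × S} (hpq : p ≠ q) (Z : (ι × S) → ℝ) :
    (fstep (G.rcheck p q : ℝ) (G.rcheck q p : ℝ))^[G.mcheck p q] (Z p, Z q) = (Z p, Z q) := by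
  have h1 : ((rhoF (G.gen p) * rhoF (G.gen q)) ^ G.mcheck p q)
      = (1 : ((ι × S) → ℝ) ≃ₗ[ℝ] ((ι × S) → ℝ)) := by
    rw [← map_mul, ← map_pow, G.gen_mul_pow p q, map_one]
  have h2 := Tpow_coord G rhoF hrhoF hpq (G.mcheck p q) Z
  rw [h1] at h2
  exact h2.symm

theorem rc_zero_symm {p q : ι × S} (hpq : p ≠ q) (h : G.rcheck p q = 0) :
    G.rcheck q p = 0 := by
  have hm : G.mcheck p q = 2 := by
    unfold GeomSetting.mcheck
    rw [if_neg hpq, if_pos h]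
  have H1 := rel_coord G rhoF hrhoF hpq (Pi.single p 1)
  have H2 := rel_coord G rhoF hrhoF hpq (Pi.single q 1)
  rw [hm] at H1 H2
  rw [Pi.single_eq_same, Pi.single_eq_of_ne (Ne.symm hpq)] at H1
  rw [Pi.single_eq_same, Pi.single_eq_of_ne hpq] at H2
  have := (fstep_two H1 H2).2
  exact_mod_cast this

theorem rc_negone_symm {p q : ι × S} (hpq : p ≠ q) (h : G.rcheck p q = -1) :
    G.rcheck q p = -1 := by
  have hm : G.mcheck p q = 3 := by
    unfold GeomSetting.mcheck
    rw [if_neg hpq, if_neg (by omega : ¬ G.rcheck p q = 0), if_pos h]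
  have H1 := rel_coord G rhoF hrhoF hpq (Pi.single p 1)
  rw [hm] at H1
  rw [Pi.single_eq_same, Pi.single_eq_of_ne (Ne.symm hpq)] at H1
  rw [h] at H1
  push_cast at H1
  have := fstep_three H1
  exact_mod_cast this

theorem mcheck_symm (p q : ι × S) : G.mcheck p q = G.mcheck q p := by
  by_cases hpq : p = q
  · rw [hpq]
  have hqp : q ≠ p := Ne.symm hpq
  by_cases h0 : G.rcheck p q = 0
  · have h0' := rc_zero_symm G rhoF hrhoF hpq h0
    unfold GeomSetting.mcheck
    rw [if_neg hpq, if_neg hqp, if_pos h0, if_pos h0']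
  by_cases h1 : G.rcheck p q = -1
  · have h1' := rc_negone_symm G rhoF hrhoF hpq h1
    unfold GeomSetting.mcheck
    rw [if_neg hpq, if_neg hqp, if_neg h0, if_pos h1,
      if_neg (by omega : ¬ G.rcheck q p = 0), if_pos h1']
  · have h0' : G.rcheck q p ≠ 0 := fun hc => h0 (rc_zero_symm G rhoF hrhoF hqp hc)
    have h1' : G.rcheck q p ≠ -1 := fun hc => h1 (rc_negone_symm G rhoF hrhoF hqp hc)
    unfold GeomSetting.mcheck
    rw [if_neg hpq, if_neg hqp, if_neg h0, if_neg h1, if_neg h0', if_neg h1']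

end WcheckRel

section WcheckCox

variable {R : Type*} [Ring R] {ι : Type*} [Fintype ι] [DecidableEq ι]
  {S : Type*} [Fintype S] [DecidableEq S] {W : Type*} [Group W]
variable (G : GeomSetting R ι S W)
  (rhoF : G.Wcheck →* (((ι × S) → ℝ) ≃ₗ[ℝ] ((ι × S) → ℝ)))
  (hrhoF : ∀ (p : ι × S) (Z : (ι × S) → ℝ) (q : ι × S),
    rhoF (G.gen p) Z q = Z q - (G.rcheck p q : ℝ) * Z p)

/-- The unfolded Coxeter matrix, as a `CoxeterMatrix`. -/
def McheckMatrix : CoxeterMatrix (ι × S) where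
  M := Matrix.of fun p q => G.mcheck p q
  isSymm := by
    ext p q
    exact mcheck_symm G rhoF hrhoF q p
  diagonal := fun p => G.mcheck_diag_s11 p
  off_diagonal := fun p q h => G.mcheck_ne_one h

theorem McheckMatrix_apply (p q : ι × S) : McheckMatrix G rhoF hrhoF p q = G.mcheck p q := rfl

theorem Mcheck_lift_phi :
    ∀ r ∈ G.rels, FreeGroup.lift (fun p => (McheckMatrix G rhoF hrhoF).simple p) r = 1 := by
  rintro r ⟨⟨p, q⟩, rfl⟩
  rw [map_pow, map_mul, FreeGroup.lift_apply_of, FreeGroup.lift_apply_of]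
  have h := (McheckMatrix G rhoF hrhoF).toCoxeterSystem.simple_mul_simple_pow p q
  rw [CoxeterMatrix.toCoxeterSystem_simple] at h
  exact h

theorem Mcheck_lift_psi :
    ∀ r ∈ (McheckMatrix G rhoF hrhoF).relationsSet, FreeGroup.lift G.gen r = 1 := by
  rintro r ⟨⟨p, q⟩, rfl⟩
  show FreeGroup.lift G.gen ((FreeGroup.of p * FreeGroup.of q) ^ (McheckMatrix G rhoF hrhoF) p q) = 1
  rw [map_pow, map_mul, FreeGroup.lift_apply_of, FreeGroup.lift_apply_of]
  exact G.gen_mul_pow p q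

/-- The group isomorphism between `W̌` and the Coxeter group of `m̌`. -/
def WcheckEquiv : G.Wcheck ≃* (McheckMatrix G rhoF hrhoF).Group :=
  MonoidHom.toMulEquiv
    (PresentedGroup.toGroup (Mcheck_lift_phi G rhoF hrhoF))
    (PresentedGroup.toGroup (Mcheck_lift_psi G rhoF hrhoF))
    (by
      apply PresentedGroup.ext
      intro x
      show PresentedGroup.toGroup (Mcheck_lift_psi G rhoF hrhoF)
        ((PresentedGroup.toGroup (Mcheck_lift_phi G rhoF hrhoF)) (PresentedGroup.of x)) = _
      rw [PresentedGroup.toGroup.of]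
      show PresentedGroup.toGroup (Mcheck_lift_psi G rhoF hrhoF) (PresentedGroup.of x) = _
      rw [PresentedGroup.toGroup.of]
      rfl)
    (by
      apply PresentedGroup.ext
      intro x
      show PresentedGroup.toGroup (Mcheck_lift_phi G rhoF hrhoF)
        ((PresentedGroup.toGroup (Mcheck_lift_psi G rhoF hrhoF)) (PresentedGroup.of x)) = _
      rw [PresentedGroup.toGroup.of]
      show PresentedGroup.toGroup (Mcheck_lift_phi G rhoF hrhoF) (G.gen x) = _
      rw [show G.gen x = PresentedGroup.of x from rfl, PresentedGroup.toGroup.of]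
      rfl)

/-- The Coxeter system on `W̌`. -/
def csF : CoxeterSystem (McheckMatrix G rhoF hrhoF) G.Wcheck := ⟨WcheckEquiv G rhoF hrhoF⟩

theorem csF_simple (p : ι × S) : (csF G rhoF hrhoF).simple p = G.gen p := by
  show (WcheckEquiv G rhoF hrhoF).symm (PresentedGroup.of p) = G.gen p
  show PresentedGroup.toGroup (Mcheck_lift_psi G rhoF hrhoF) (PresentedGroup.of p) = G.gen p
  rw [PresentedGroup.toGroup.of]

theorem mcheck_cases {p q : ι × S} (hpq : p ≠ q) :
    (G.mcheck p q = 2 ∧ G.rcheck p q = 0)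
    ∨ (G.mcheck p q = 3 ∧ G.rcheck p q = -1)
    ∨ (G.mcheck p q = 0 ∧ G.rcheck p q ≤ -2) := by
  have hle := G.rcheck_nonpos_s11 hpq
  unfold GeomSetting.mcheck
  rw [if_neg hpq]
  split_ifs with h0 h1
  · exact Or.inl ⟨rfl, h0⟩
  · exact Or.inr (Or.inl ⟨rfl, h1⟩)
  · exact Or.inr (Or.inr ⟨rfl, by omega⟩)

end WcheckCox
/-- **Proposition 4.14 (two Vinberg systems).** The fundamental cones `C` and `Č` are
closed convex cones whose interiors are `C°` and `Č°`; the actions of `W` and `W̌` are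
simply transitive on translates of the open fundamental chambers; and the fixed-point set
of each generator is exactly the corresponding wall. -/
theorem two_vinberg_systems (G : GeomSetting R ι S W)
    (rhoE : W →* ((S → ℝ) ≃ₗ[ℝ] (S → ℝ)))
    (hrhoE : ∀ (s : S) (Z : S → ℝ) (t : S),
      rhoE (G.cs.simple s) Z t = Z t - G.FP (G.cartan s t) * Z s)
    (rhoF : G.Wcheck →* (((ι × S) → ℝ) ≃ₗ[ℝ] ((ι × S) → ℝ)))
    (hrhoF : ∀ (p : ι × S) (Z : (ι × S) → ℝ) (q : ι × S),
      rhoF (G.gen p) Z q = Z q - (G.rcheck p q : ℝ) * Z p) :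
    (IsClosed (coneC S) ∧ Convex ℝ (coneC S)
      ∧ (∀ Z ∈ coneC S, ∀ a : ℝ, 0 ≤ a → a • Z ∈ coneC S)
      ∧ interior (coneC S) = coneCo S ∧ (coneCo S).Nonempty)
    ∧ (IsClosed (coneC (ι × S)) ∧ Convex ℝ (coneC (ι × S))
      ∧ (∀ Z ∈ coneC (ι × S), ∀ a : ℝ, 0 ≤ a → a • Z ∈ coneC (ι × S))
      ∧ interior (coneC (ι × S)) = coneCo (ι × S) ∧ (coneCo (ι × S)).Nonempty)
    ∧ (∀ w : W, ((rhoE w '' coneCo S) ∩ coneCo S).Nonempty ↔ w = 1)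
    ∧ (∀ w : G.Wcheck, ((rhoF w '' coneCo (ι × S)) ∩ coneCo (ι × S)).Nonempty ↔ w = 1)
    ∧ (∀ s : S, {Z : S → ℝ | rhoE (G.cs.simple s) Z = Z} = wallH S s)
    ∧ (∀ p : ι × S, {Z : (ι × S) → ℝ | rhoF (G.gen p) Z = Z} = wallH (ι × S) p) 
    := by
  classical
  -- data for the `W`-side Vinberg system
  have hdiagE : ∀ s : S, G.FP (G.cartan s s) = 2 := fun s => G.FP_cartan_diag s
  have hoffE : ∀ s t : S, s ≠ t → G.FP (G.cartan s t) ≤ 0 := fun s t h => G.FP_cartan_nonpos h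
  have hfinE : ∀ s t : S, s ≠ t → G.M s t ≠ 0 →
      G.FP (G.cartan s t) * G.FP (G.cartan t s)
        = 4 * Real.cos (Real.pi / (G.M s t : ℝ)) ^ 2 := by
    intro s t hst hM
    have h1 := G.cartan_fin s t hst hM
    have h2 : G.FP (G.cartan t s) = G.FP (G.cartan s t) := G.FP_cartan_symm hst
    rw [h2]
    show G.FP (G.B (simRoot R s) (simRoot R t)) * G.FP (G.B (simRoot R s) (simRoot R t)) = _
    rw [h1]
    ring
  have hinfE : ∀ s t : S, s ≠ t → G.M s t = 0 →
      4 ≤ G.FP (G.cartan s t) * G.FP (G.cartan t s) := by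
    intro s t hst hM
    have h1 := G.cartan_inf s t hst hM
    have h2 : G.FP (G.cartan t s) = G.FP (G.cartan s t) := G.FP_cartan_symm hst
    rw [h2]
    show 4 ≤ G.FP (G.B (simRoot R s) (simRoot R t)) * G.FP (G.B (simRoot R s) (simRoot R t))
    nlinarith
  have hρE : ∀ (i : S) (Z : S → ℝ) (y : S),
      rhoE (G.cs.simple i) Z y = Z y - G.FP (G.cartan i y) * Z i := fun i Z y => hrhoE i Z y
  -- data for the `W̌`-side Vinberg system
  have hdiagF : ∀ p : ι × S, ((G.rcheck p p : ℝ)) = 2 := by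
    intro p; rw [G.rcheck_diag_s11 p]; norm_num
  have hoffF : ∀ p q : ι × S, p ≠ q → ((G.rcheck p q : ℝ)) ≤ 0 := by
    intro p q h
    exact_mod_cast G.rcheck_nonpos_s11 h
  have hfinF : ∀ p q : ι × S, p ≠ q → (McheckMatrix G rhoF hrhoF) p q ≠ 0 →
      (G.rcheck p q : ℝ) * (G.rcheck q p : ℝ)
        = 4 * Real.cos (Real.pi / ((McheckMatrix G rhoF hrhoF) p q : ℝ)) ^ 2 := by
    intro p q hpq hM
    rw [McheckMatrix_apply] at hM ⊢
    rcases mcheck_cases G hpq with ⟨hm, hr⟩ | ⟨hm, hr⟩ | ⟨hm, hr⟩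
    · have hr' := rc_zero_symm G rhoF hrhoF hpq hr
      rw [hm, hr, hr']
      norm_num [Real.cos_pi_div_two]
    · have hr' := rc_negone_symm G rhoF hrhoF hpq hr
      rw [hm, hr, hr']
      rw [show ((3 : ℕ) : ℝ) = 3 by norm_num, Real.cos_pi_div_three]
      norm_num
    · exact absurd hm hM
  have hinfF : ∀ p q : ι × S, p ≠ q → (McheckMatrix G rhoF hrhoF) p q = 0 →
      4 ≤ (G.rcheck p q : ℝ) * (G.rcheck q p : ℝ) := by
    intro p q hpq hM
    rw [McheckMatrix_apply] at hM
    rcases mcheck_cases G hpq with ⟨hm, _⟩ | ⟨hm, _⟩ | ⟨_, hr⟩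
    · rw [hm] at hM; omega
    · rw [hm] at hM; omega
    · have hm' : G.mcheck q p = 0 := by rw [← mcheck_symm G rhoF hrhoF p q, hM]
      rcases mcheck_cases G (Ne.symm hpq) with ⟨hm2, _⟩ | ⟨hm2, _⟩ | ⟨_, hr2⟩
      · rw [hm2] at hm'; omega
      · rw [hm2] at hm'; omega
      · have : (4 : ℤ) ≤ G.rcheck p q * G.rcheck q p := by nlinarith
        exact_mod_cast this
  have hρF : ∀ (p : ι × S) (Z : (ι × S) → ℝ) (q : ι × S),
      rhoF ((csF G rhoF hrhoF).simple p) Z q = Z q - (G.rcheck p q : ℝ) * Z p := by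
    intro p Z q
    rw [csF_simple]
    exact hrhoF p Z q
  refine ⟨⟨coneC_isClosed S, coneC_convex S, fun Z hZ a ha => coneC_smul S hZ ha,
      interior_coneC S, coneCo_nonempty S⟩,
    ⟨coneC_isClosed (ι × S), coneC_convex (ι × S), fun Z hZ a ha => coneC_smul (ι × S) hZ ha,
      interior_coneC (ι × S), coneCo_nonempty (ι × S)⟩, ?_, ?_, ?_, ?_⟩
  · intro w
    constructor
    · rintro ⟨Z', ⟨Z, hZ, rfl⟩, hZ'⟩
      exact tits_faithful_s11 G.cs (fun s t => G.FP (G.cartan s t)) rhoE hdiagE hoffE hfinE hinfE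
        hρE w Z hZ hZ'
    · rintro rfl
      refine ⟨fun _ => 1, ⟨fun _ => 1, fun x => one_pos, ?_⟩, fun x => one_pos⟩
      rw [map_one]
      rfl
  · intro w
    constructor
    · rintro ⟨Z', ⟨Z, hZ, rfl⟩, hZ'⟩
      exact tits_faithful_s11 (csF G rhoF hrhoF) (fun p q => (G.rcheck p q : ℝ)) rhoF
        hdiagF hoffF hfinF hinfF hρF w Z hZ hZ'
    · rintro rfl
      refine ⟨fun _ => 1, ⟨fun _ => 1, fun x => one_pos, ?_⟩, fun x => one_pos⟩
      rw [map_one]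
      rfl
  · intro s
    exact tits_fixed G.cs (fun s t => G.FP (G.cartan s t)) rhoE hdiagE hρE s
  · intro p
    have h := tits_fixed (csF G rhoF hrhoF) (fun p q => (G.rcheck p q : ℝ)) rhoF
      hdiagF hρF p
    rw [csF_simple] at h
    exact h



end
end
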